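/- arXiv:math/0205206 — 3 statements merged into one kernel-verified Lean document; each statement's English description precedes it below -/
import Mathlib

section
/- For all n ≥ 1, there exists a bijection between the set of permutations of {1,...,n} avoiding 132, 2341, and 3241, and the set of tilings of a 1×(n-1) rectangle with tiles of size 1×1 and 1×2, where each 1×1 tile is colored red or blue. -/
/-- A function `π : Fin n → Fin n` contains the pattern `p : Fin k → ℕ` if there is a
strictly increasing choice of indices whose images under `π` have the same pairwise
order relations as the entries of `p`. -/
def Contains {n k : ℕ} (π : Fin n → Fin n) (p : Fin k → ℕ) : Prop :=
  ∃ f : Fin k → Fin n, StrictMono f ∧ ∀ i j, p i < p j ↔ π (f i) < π (f j)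

/-- `π` avoids the pattern `p`. -/
def Avoids {n k : ℕ} (π : Fin n → Fin n) (p : Fin k → ℕ) : Prop := ¬ Contains π p

/-- The set of permutations of `Fin n` avoiding the patterns 132, 2341 and 3241,
i.e. the 132-avoiding two-stack sortable permutations. -/
def TSS132 (n : ℕ) : Set (Fin n → Fin n) :=
  {π | Function.Bijective π ∧ Avoids π ![1,3,2] ∧ Avoids π ![2,3,4,1] ∧ Avoids π ![3,2,4,1]}

/-- The Pell numbers. -/
def pell : ℕ → ℕ
  | 0 => 0
  | 1 => 1
  | n+2 => 2 * pell (n+1) + pell n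

/-- A tiling of a `1 × L` rectangle: a list of tiles, each either a colored `1 × 1`
tile (`Sum.inl b` with color `b : Bool`) or a `1 × 2` tile (`Sum.inr ()`), whose
lengths sum to `L`. -/
def Tiling (L : ℕ) : Type :=
  {l : List (Bool ⊕ Unit) // (l.map (Sum.elim (fun _ => 1) (fun _ => 2))).sum = L}


lemma avoids_of_lt {n k : ℕ} (π : Fin n → Fin n) (p : Fin k → ℕ) (h : n < k) : Avoids π p := by
  rintro ⟨f, hf, -⟩
  have := Fintype.card_le_of_injective f hf.injective
  simp only [Fintype.card_fin] at this; omega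

lemma contains_of_map {n m k : ℕ} {π : Fin n → Fin n} {σ : Fin m → Fin m}
    (g : Fin m → Fin n) (hg : StrictMono g)
    (hval : ∀ i j, σ i < σ j ↔ π (g i) < π (g j)) {p : Fin k → ℕ} :
    Contains σ p → Contains π p := by
  rintro ⟨f, hf, hiff⟩
  exact ⟨g ∘ f, hg.comp hf, fun i j => (hiff i j).trans (hval _ _)⟩

def res0 {n : ℕ} (π : Fin (n+2) → Fin (n+2)) : Fin (n+1) → Fin (n+1) :=
  fun i => ⟨(π ⟨i.1+1, Nat.succ_lt_succ i.2⟩).1 % (n+1), Nat.mod_lt _ (Nat.succ_pos n)⟩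

def resL {n : ℕ} (π : Fin (n+2) → Fin (n+2)) : Fin (n+1) → Fin (n+1) :=
  fun i => ⟨(π ⟨i.1, Nat.lt_succ_of_lt i.2⟩).1 % (n+1), Nat.mod_lt _ (Nat.succ_pos n)⟩

def res1 {n : ℕ} (π : Fin (n+3) → Fin (n+3)) : Fin (n+1) → Fin (n+1) :=
  fun i => ⟨(π ⟨i.1+2, Nat.succ_lt_succ (Nat.succ_lt_succ i.2)⟩).1 % (n+1), Nat.mod_lt _ (Nat.succ_pos n)⟩

abbrev fm1 (n : ℕ) : Fin (n+2) := ⟨n+1, Nat.lt_succ_self _⟩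
abbrev g1m3 (n : ℕ) : Fin (n+3) := ⟨n+1, Nat.lt_succ_of_lt (Nat.lt_succ_self _)⟩
abbrev g2m3 (n : ℕ) : Fin (n+3) := ⟨n+2, Nat.lt_succ_self _⟩

def ext0 {n : ℕ} (σ : Fin (n+1) → Fin (n+1)) : Fin (n+2) → Fin (n+2) :=
  fun j => if h : j.1 = 0 then ⟨n+1, Nat.lt_succ_self _⟩
    else ⟨(σ ⟨j.1-1, by have := j.2; omega⟩).1, Nat.lt_succ_of_lt (σ _).2⟩

def extL {n : ℕ} (σ : Fin (n+1) → Fin (n+1)) : Fin (n+2) → Fin (n+2) :=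
  fun j => if h : j.1 = n+1 then ⟨n+1, Nat.lt_succ_self _⟩
    else ⟨(σ ⟨j.1, by have := j.2; omega⟩).1, Nat.lt_succ_of_lt (σ _).2⟩

def ext1 {n : ℕ} (σ : Fin (n+1) → Fin (n+1)) : Fin (n+3) → Fin (n+3) :=
  fun j => if j.1 = 0 then g1m3 n
    else if j.1 = 1 then g2m3 n
    else ⟨(σ ⟨j.1-2, by have := j.2; omega⟩).1, Nat.lt_succ_of_lt (Nat.lt_succ_of_lt (σ _).2)⟩

-- value lemmas
section
variable {n : ℕ} (σ : Fin (n+1) → Fin (n+1))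

lemma ext0_val0 {j : Fin (n+2)} (h : j.1 = 0) : ext0 σ j = fm1 n := by
  simp [ext0, h]

lemma ext0_val {j : Fin (n+2)} (h : j.1 ≠ 0) :
    (ext0 σ j).1 = (σ ⟨j.1-1, by have := j.2; omega⟩).1 := by
  simp [ext0, h]

lemma ext0_le {j : Fin (n+2)} (h : j.1 ≠ 0) : (ext0 σ j).1 ≤ n := by
  rw [ext0_val σ h]; exact Nat.lt_succ_iff.mp (σ _).2

lemma extL_valL {j : Fin (n+2)} (h : j.1 = n+1) : extL σ j = fm1 n := by
  simp [extL, h]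

lemma extL_val {j : Fin (n+2)} (h : j.1 ≠ n+1) :
    (extL σ j).1 = (σ ⟨j.1, by have := j.2; omega⟩).1 := by
  simp [extL, h]

lemma extL_le {j : Fin (n+2)} (h : j.1 ≠ n+1) : (extL σ j).1 ≤ n := by
  rw [extL_val σ h]; exact Nat.lt_succ_iff.mp (σ _).2

lemma ext1_val0 {j : Fin (n+3)} (h : j.1 = 0) : ext1 σ j = g1m3 n := by
  simp [ext1, h]

lemma ext1_val1 {j : Fin (n+3)} (h : j.1 = 1) : ext1 σ j = g2m3 n := by
  simp [ext1, h]

lemma ext1_val {j : Fin (n+3)} (h : 2 ≤ j.1) :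
    (ext1 σ j).1 = (σ ⟨j.1-2, by have := j.2; omega⟩).1 := by
  have h0 : ¬ j.1 = 0 := by omega
  have h1 : ¬ j.1 = 1 := by omega
  simp [ext1, h0, h1]

lemma ext1_le {j : Fin (n+3)} (h : 2 ≤ j.1) : (ext1 σ j).1 ≤ n := by
  rw [ext1_val σ h]; exact Nat.lt_succ_iff.mp (σ _).2

end

lemma contains_ext0 {n k : ℕ} (σ : Fin (n+1) → Fin (n+1)) (p : Fin (k+1) → ℕ)
    (j0 : Fin (k+1)) (h0 : p 0 < p j0) :
    Contains (ext0 σ) p → Contains σ p := by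
  rintro ⟨f, hf, hiff⟩
  have hj0 : (0 : Fin (k+1)) < j0 := by
    rcases Fin.eq_zero_or_eq_succ j0 with h | ⟨j, rfl⟩
    · subst h; exact absurd h0 (lt_irrefl _)
    · exact Fin.succ_pos j
  have hne : ∀ i, (f i).1 ≠ 0 := by
    intro i hi
    have hi0 : i = 0 := by
      by_contra hcon
      have h1 : f 0 < f i := hf (Fin.pos_of_ne_zero hcon)
      rw [Fin.lt_def, hi] at h1; omega
    subst hi0
    have h2 := (hiff 0 j0).mp h0
    have h3 : f 0 < f j0 := hf hj0
    rw [Fin.lt_def] at h2 h3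
    rw [(ext0_val0 σ hi : ext0 σ (f 0) = _)] at h2
    have h4 := ext0_le σ (j := f j0) (by omega)
    simp at h2; omega
  refine ⟨fun i => ⟨(f i).1 - 1, by have := (f i).2; omega⟩, ?_, ?_⟩
  · intro a b hab
    have h1 := hf hab
    rw [Fin.lt_def] at h1 ⊢
    have := hne a; have := hne b
    simp only at *; omega
  · intro i j
    rw [hiff i j, Fin.lt_def, Fin.lt_def,
      ext0_val σ (hne i), ext0_val σ (hne j)]

lemma contains_extL {n k : ℕ} (σ : Fin (n+1) → Fin (n+1)) (p : Fin (k+1) → ℕ)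
    (j0 : Fin (k+1)) (hj0 : j0 ≠ Fin.last k) (h0 : ¬ p j0 < p (Fin.last k)) :
    Contains (extL σ) p → Contains σ p := by
  rintro ⟨f, hf, hiff⟩
  have hne : ∀ i, (f i).1 ≠ n+1 := by
    intro i hi
    have hi0 : i = Fin.last k := by
      by_contra hcon
      have h1 : f i < f (Fin.last k) := hf (lt_of_le_of_ne (Fin.le_last i) hcon)
      rw [Fin.lt_def, hi] at h1
      have := (f (Fin.last k)).2; omega
    subst hi0
    have h3 : f j0 < f (Fin.last k) := hf (lt_of_le_of_ne (Fin.le_last j0) hj0)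
    rw [Fin.lt_def, hi] at h3
    have h4 := extL_le σ (j := f j0) (by omega)
    apply h0
    rw [hiff j0 (Fin.last k), Fin.lt_def, (extL_valL σ hi : extL σ (f (Fin.last k)) = _)]
    simp; omega
  refine ⟨fun i => ⟨(f i).1, by have := (f i).2; have := hne i; omega⟩, ?_, ?_⟩
  · intro a b hab
    have h1 := hf hab
    rw [Fin.lt_def] at h1 ⊢
    exact h1
  · intro i j
    rw [hiff i j, Fin.lt_def, Fin.lt_def,
      extL_val σ (hne i), extL_val σ (hne j)]

lemma contains_ext1 {n k : ℕ} (σ : Fin (n+1) → Fin (n+1)) (p : Fin (k+2) → ℕ)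
    (j0 : Fin (k+2)) (hj2 : 2 ≤ j0.1) (h0 : p 0 < p j0) :
    Contains (ext1 σ) p → Contains σ p := by
  rintro ⟨f, hf, hiff⟩
  have hj00 : (0 : Fin (k+2)) < j0 := by
    rw [Fin.lt_def]; simpa using (by omega : 0 < j0.1)
  have hno1 : ∀ i, (f i).1 ≠ 1 := by
    intro i hi
    have hmax : ∀ j, j ≠ i → p j < p i := by
      intro j hj
      rw [hiff j i, Fin.lt_def, (ext1_val1 σ hi : ext1 σ (f i) = _)]
      have hfj : f j ≠ f i := fun h => hj (hf.injective h)
      have hfjv : (f j).1 ≠ 1 := by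
        intro h; exact hfj (Fin.ext (h.trans hi.symm))
      rcases Nat.lt_or_ge (f j).1 2 with h | h
      · have h00 : (f j).1 = 0 := by omega
        rw [(ext1_val0 σ h00 : ext1 σ (f j) = _)]; simp
      · have := ext1_le σ (j := f j) h
        simp; omega
    rcases Nat.lt_or_ge i.1 2 with hi2 | hi2
    · rcases Nat.lt_or_ge i.1 1 with hi1 | hi1
      · -- i = 0
        have : i = 0 := Fin.ext (by rw [Fin.val_zero]; omega)
        subst this
        exact absurd h0 (lt_asymm (hmax j0 (by intro h; rw [h] at hj2; simp at hj2)))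
      · -- i.1 = 1
        have hii : i.1 = 1 := by omega
        have hf0 : f 0 < f i := hf (by rw [Fin.lt_def, Fin.val_zero]; omega)
        rw [Fin.lt_def, hi] at hf0
        have hf00 : (f 0).1 = 0 := by omega
        have hij0 : i < j0 := by rw [Fin.lt_def]; omega
        have hfij0 : f i < f j0 := hf hij0
        rw [Fin.lt_def, hi] at hfij0
        have h4 := ext1_le σ (j := f j0) (by omega)
        have h5 := (hiff 0 j0).mp h0
        rw [Fin.lt_def, (ext1_val0 σ hf00 : ext1 σ (f 0) = _)] at h5
        simp at h5; omega
    · -- 2 ≤ i.1 : impossible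
      have h01 : f 0 < f 1 := hf (by rw [Fin.lt_def]; simp)
      have h1i : f 1 < f i := hf (by rw [Fin.lt_def]; simpa using (by omega : 1 < i.1))
      rw [Fin.lt_def] at h01 h1i
      omega
  have hno0 : ∀ i, (f i).1 ≠ 0 := by
    intro i hi
    have hi0 : i = 0 := by
      by_contra hcon
      have h1 : f 0 < f i := hf (Fin.pos_of_ne_zero hcon)
      rw [Fin.lt_def, hi] at h1; omega
    subst hi0
    have h3 : f 0 < f j0 := hf hj00
    rw [Fin.lt_def, hi] at h3
    have h4 := ext1_le σ (j := f j0) (by have := hno1 j0; omega)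
    have h5 := (hiff 0 j0).mp h0
    rw [Fin.lt_def, (ext1_val0 σ hi : ext1 σ (f 0) = _)] at h5
    simp at h5; omega
  have hge : ∀ i, 2 ≤ (f i).1 := by
    intro i; have := hno0 i; have := hno1 i; omega
  refine ⟨fun i => ⟨(f i).1 - 2, by have := (f i).2; omega⟩, ?_, ?_⟩
  · intro a b hab
    have h1 := hf hab
    rw [Fin.lt_def] at h1 ⊢
    have := hge a; have := hge b
    simp only at *; omega
  · intro i j
    rw [hiff i j, Fin.lt_def, Fin.lt_def,
      ext1_val σ (hge i), ext1_val σ (hge j)]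

lemma bij_of_inj {m : ℕ} {f : Fin m → Fin m} (h : Function.Injective f) :
    Function.Bijective f := Finite.injective_iff_bijective.mp h

section
variable {n : ℕ}

lemma res0_lt {π : Fin (n+2) → Fin (n+2)} (hinj : Function.Injective π)
    (h0 : π 0 = fm1 n) (i : Fin (n+1)) :
    (π ⟨i.1+1, Nat.succ_lt_succ i.2⟩).1 < n+1 := by
  set a := π ⟨i.1+1, Nat.succ_lt_succ i.2⟩ with ha
  have h2 := a.2
  rcases Nat.lt_or_ge a.1 (n+1) with h | h
  · exact h
  · exfalso
    have he : a = π 0 := by rw [h0]; exact Fin.ext (by simp; omega)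
    have := hinj he
    rw [Fin.ext_iff] at this; simp at this

lemma res0_val {π : Fin (n+2) → Fin (n+2)} (hinj : Function.Injective π)
    (h0 : π 0 = fm1 n) (i : Fin (n+1)) :
    (res0 π i).1 = (π ⟨i.1+1, Nat.succ_lt_succ i.2⟩).1 :=
  Nat.mod_eq_of_lt (res0_lt hinj h0 i)

lemma resL_lt {π : Fin (n+2) → Fin (n+2)} (hinj : Function.Injective π)
    (hL : π (fm1 n) = fm1 n) (i : Fin (n+1)) :
    (π ⟨i.1, Nat.lt_succ_of_lt i.2⟩).1 < n+1 := by
  set a := π ⟨i.1, Nat.lt_succ_of_lt i.2⟩ with ha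
  have h2 := a.2
  rcases Nat.lt_or_ge a.1 (n+1) with h | h
  · exact h
  · exfalso
    have he : a = π (fm1 n) := by rw [hL]; exact Fin.ext (by simp; omega)
    have := hinj he
    rw [Fin.ext_iff] at this; simp at this
    have := i.2; omega

lemma resL_val {π : Fin (n+2) → Fin (n+2)} (hinj : Function.Injective π)
    (hL : π (fm1 n) = fm1 n) (i : Fin (n+1)) :
    (resL π i).1 = (π ⟨i.1, Nat.lt_succ_of_lt i.2⟩).1 :=
  Nat.mod_eq_of_lt (resL_lt hinj hL i)

lemma res1_lt {π : Fin (n+3) → Fin (n+3)} (hinj : Function.Injective π)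
    (h0 : π 0 = g1m3 n) (h1 : π 1 = g2m3 n) (i : Fin (n+1)) :
    (π ⟨i.1+2, Nat.succ_lt_succ (Nat.succ_lt_succ i.2)⟩).1 < n+1 := by
  set a := π ⟨i.1+2, Nat.succ_lt_succ (Nat.succ_lt_succ i.2)⟩ with ha
  have h2 := a.2
  rcases Nat.lt_or_ge a.1 (n+1) with h | h
  · exact h
  · exfalso
    rcases Nat.lt_or_ge a.1 (n+2) with h' | h'
    · have he : a = π 0 := by rw [h0]; exact Fin.ext (by simp; omega)
      have := hinj he
      rw [Fin.ext_iff] at this; simp at this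
    · have he : a = π 1 := by rw [h1]; exact Fin.ext (by simp; omega)
      have := hinj he
      simp [Fin.ext_iff] at this

lemma res1_val {π : Fin (n+3) → Fin (n+3)} (hinj : Function.Injective π)
    (h0 : π 0 = g1m3 n) (h1 : π 1 = g2m3 n) (i : Fin (n+1)) :
    (res1 π i).1 = (π ⟨i.1+2, Nat.succ_lt_succ (Nat.succ_lt_succ i.2)⟩).1 :=
  Nat.mod_eq_of_lt (res1_lt hinj h0 h1 i)

lemma mem_res0 {π : Fin (n+2) → Fin (n+2)} (hπ : π ∈ TSS132 (n+2))
    (h0 : π 0 = fm1 n) : res0 π ∈ TSS132 (n+1) := by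
  obtain ⟨hbij, ha1, ha2, ha3⟩ := hπ
  have hval : ∀ i j : Fin (n+1), res0 π i < res0 π j ↔
      π ⟨i.1+1, Nat.succ_lt_succ i.2⟩ < π ⟨j.1+1, Nat.succ_lt_succ j.2⟩ := by
    intro i j
    rw [Fin.lt_def, Fin.lt_def, res0_val hbij.1 h0, res0_val hbij.1 h0]
  have hg : StrictMono (fun i : Fin (n+1) => (⟨i.1+1, Nat.succ_lt_succ i.2⟩ : Fin (n+2))) := by
    intro a b hab; rw [Fin.lt_def] at hab ⊢; simpa using hab
  refine ⟨bij_of_inj ?_, ?_, ?_, ?_⟩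
  · intro i j hij
    have hv := congrArg Fin.val hij
    rw [res0_val hbij.1 h0, res0_val hbij.1 h0] at hv
    have := hbij.1 (Fin.ext hv)
    rw [Fin.ext_iff] at this ⊢; simpa using this
  · exact fun hc => ha1 (contains_of_map _ hg hval hc)
  · exact fun hc => ha2 (contains_of_map _ hg hval hc)
  · exact fun hc => ha3 (contains_of_map _ hg hval hc)

lemma mem_resL {π : Fin (n+2) → Fin (n+2)} (hπ : π ∈ TSS132 (n+2))
    (hL : π (fm1 n) = fm1 n) : resL π ∈ TSS132 (n+1) := by
  obtain ⟨hbij, ha1, ha2, ha3⟩ := hπ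
  have hval : ∀ i j : Fin (n+1), resL π i < resL π j ↔
      π ⟨i.1, Nat.lt_succ_of_lt i.2⟩ < π ⟨j.1, Nat.lt_succ_of_lt j.2⟩ := by
    intro i j
    rw [Fin.lt_def, Fin.lt_def, resL_val hbij.1 hL, resL_val hbij.1 hL]
  have hg : StrictMono (fun i : Fin (n+1) => (⟨i.1, Nat.lt_succ_of_lt i.2⟩ : Fin (n+2))) := by
    intro a b hab; rw [Fin.lt_def] at hab ⊢; simpa using hab
  refine ⟨bij_of_inj ?_, ?_, ?_, ?_⟩
  · intro i j hij
    have hv := congrArg Fin.val hij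
    rw [resL_val hbij.1 hL, resL_val hbij.1 hL] at hv
    have := hbij.1 (Fin.ext hv)
    rw [Fin.ext_iff] at this ⊢; simpa using this
  · exact fun hc => ha1 (contains_of_map _ hg hval hc)
  · exact fun hc => ha2 (contains_of_map _ hg hval hc)
  · exact fun hc => ha3 (contains_of_map _ hg hval hc)

lemma mem_res1 {π : Fin (n+3) → Fin (n+3)} (hπ : π ∈ TSS132 (n+3))
    (h0 : π 0 = g1m3 n) (h1 : π 1 = g2m3 n) : res1 π ∈ TSS132 (n+1) := by
  obtain ⟨hbij, ha1, ha2, ha3⟩ := hπ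
  have hval : ∀ i j : Fin (n+1), res1 π i < res1 π j ↔
      π ⟨i.1+2, Nat.succ_lt_succ (Nat.succ_lt_succ i.2)⟩ <
        π ⟨j.1+2, Nat.succ_lt_succ (Nat.succ_lt_succ j.2)⟩ := by
    intro i j
    rw [Fin.lt_def, Fin.lt_def, res1_val hbij.1 h0 h1, res1_val hbij.1 h0 h1]
  have hg : StrictMono (fun i : Fin (n+1) =>
      (⟨i.1+2, Nat.succ_lt_succ (Nat.succ_lt_succ i.2)⟩ : Fin (n+3))) := by
    intro a b hab; rw [Fin.lt_def] at hab ⊢; simpa using hab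
  refine ⟨bij_of_inj ?_, ?_, ?_, ?_⟩
  · intro i j hij
    have hv := congrArg Fin.val hij
    rw [res1_val hbij.1 h0 h1, res1_val hbij.1 h0 h1] at hv
    have := hbij.1 (Fin.ext hv)
    rw [Fin.ext_iff] at this ⊢; simp at this; omega
  · exact fun hc => ha1 (contains_of_map _ hg hval hc)
  · exact fun hc => ha2 (contains_of_map _ hg hval hc)
  · exact fun hc => ha3 (contains_of_map _ hg hval hc)

end

section
variable {n : ℕ}

lemma mem_ext0 {σ : Fin (n+1) → Fin (n+1)} (hσ : σ ∈ TSS132 (n+1)) :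
    ext0 σ ∈ TSS132 (n+2) := by
  obtain ⟨hbij, ha1, ha2, ha3⟩ := hσ
  refine ⟨bij_of_inj ?_, ?_, ?_, ?_⟩
  · intro j j' h
    have hv := congrArg Fin.val h
    by_cases hj : j.1 = 0 <;> by_cases hj' : j'.1 = 0
    · exact Fin.ext (by omega)
    · rw [ext0_val0 σ hj] at hv
      have := ext0_le σ hj'
      simp at hv; omega
    · rw [ext0_val0 σ hj'] at hv
      have := ext0_le σ hj
      simp at hv; omega
    · rw [ext0_val σ hj, ext0_val σ hj'] at hv
      have := hbij.1 (Fin.ext hv)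
      rw [Fin.ext_iff] at this; simp at this
      exact Fin.ext (by omega)
  · exact fun hc => ha1 (contains_ext0 σ ![1,3,2] 1 (by decide) hc)
  · exact fun hc => ha2 (contains_ext0 σ ![2,3,4,1] 1 (by decide) hc)
  · exact fun hc => ha3 (contains_ext0 σ ![3,2,4,1] 2 (by decide) hc)

lemma mem_extL {σ : Fin (n+1) → Fin (n+1)} (hσ : σ ∈ TSS132 (n+1)) :
    extL σ ∈ TSS132 (n+2) := by
  obtain ⟨hbij, ha1, ha2, ha3⟩ := hσ
  refine ⟨bij_of_inj ?_, ?_, ?_, ?_⟩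
  · intro j j' h
    have hv := congrArg Fin.val h
    by_cases hj : j.1 = n+1 <;> by_cases hj' : j'.1 = n+1
    · exact Fin.ext (by omega)
    · rw [extL_valL σ hj] at hv
      have := extL_le σ hj'
      simp at hv; omega
    · rw [extL_valL σ hj'] at hv
      have := extL_le σ hj
      simp at hv; omega
    · rw [extL_val σ hj, extL_val σ hj'] at hv
      have := hbij.1 (Fin.ext hv)
      rw [Fin.ext_iff] at this; simp at this
      exact Fin.ext (by omega)
  · exact fun hc => ha1 (contains_extL σ ![1,3,2] 1 (by decide) (by decide) hc)
  · exact fun hc => ha2 (contains_extL σ ![2,3,4,1] 0 (by decide) (by decide) hc)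
  · exact fun hc => ha3 (contains_extL σ ![3,2,4,1] 0 (by decide) (by decide) hc)

lemma mem_ext1 {σ : Fin (n+1) → Fin (n+1)} (hσ : σ ∈ TSS132 (n+1)) :
    ext1 σ ∈ TSS132 (n+3) := by
  obtain ⟨hbij, ha1, ha2, ha3⟩ := hσ
  refine ⟨bij_of_inj ?_, ?_, ?_, ?_⟩
  · intro j j' h
    have hv := congrArg Fin.val h
    rcases Nat.lt_or_ge j.1 2 with hj | hj <;> rcases Nat.lt_or_ge j'.1 2 with hj' | hj'
    · rcases Nat.lt_or_ge j.1 1 with h0 | h0 <;> rcases Nat.lt_or_ge j'.1 1 with h0' | h0'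
      · exact Fin.ext (by omega)
      · rw [ext1_val0 σ (by omega), ext1_val1 σ (by omega)] at hv
        simp at hv
      · rw [ext1_val1 σ (by omega), ext1_val0 σ (by omega)] at hv
        simp at hv
      · exact Fin.ext (by omega)
    · have h2 := ext1_le σ hj'
      rcases Nat.lt_or_ge j.1 1 with h0 | h0
      · rw [ext1_val0 σ (by omega)] at hv; simp at hv; omega
      · rw [ext1_val1 σ (by omega)] at hv; simp at hv; omega
    · have h2 := ext1_le σ hj
      rcases Nat.lt_or_ge j'.1 1 with h0 | h0
      · rw [ext1_val0 σ (j := j') (by omega)] at hv; simp at hv; omega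
      · rw [ext1_val1 σ (j := j') (by omega)] at hv; simp at hv; omega
    · rw [ext1_val σ hj, ext1_val σ hj'] at hv
      have := hbij.1 (Fin.ext hv)
      rw [Fin.ext_iff] at this; simp at this
      exact Fin.ext (by omega)
  · exact fun hc => ha1 (contains_ext1 σ ![1,3,2] 2 (by decide) (by decide) hc)
  · exact fun hc => ha2 (contains_ext1 σ ![2,3,4,1] 2 (by decide) (by decide) hc)
  · exact fun hc => ha3 (contains_ext1 σ ![3,2,4,1] 2 (by decide) (by decide) hc)

-- round trips
lemma ext0_res0 {π : Fin (n+2) → Fin (n+2)} (hinj : Function.Injective π)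
    (h0 : π 0 = fm1 n) : ext0 (res0 π) = π := by
  funext j; apply Fin.ext
  by_cases hj : j.1 = 0
  · rw [ext0_val0 _ hj]
    have hj0 : j = 0 := Fin.ext (by simpa using hj)
    rw [hj0, h0]
  · rw [ext0_val _ hj, res0_val hinj h0]
    exact congrArg (fun t => (π t).1) (Fin.ext (by simp; omega))

lemma res0_ext0 (σ : Fin (n+1) → Fin (n+1)) : res0 (ext0 σ) = σ := by
  funext i; apply Fin.ext
  simp only [res0]
  rw [ext0_val σ (by simp)]
  have key : ∀ x : Fin (n+1), x = i → (σ x).1 % (n+1) = (σ i).1 := by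
    intro x hx; rw [hx, Nat.mod_eq_of_lt (σ i).2]
  exact key _ (Fin.ext (by simp))

lemma extL_resL {π : Fin (n+2) → Fin (n+2)} (hinj : Function.Injective π)
    (hL : π (fm1 n) = fm1 n) : extL (resL π) = π := by
  funext j; apply Fin.ext
  by_cases hj : j.1 = n+1
  · rw [extL_valL _ hj]
    have hj0 : j = fm1 n := Fin.ext (by simpa using hj)
    rw [hj0, hL]
  · rw [extL_val _ hj, resL_val hinj hL]

lemma resL_extL (σ : Fin (n+1) → Fin (n+1)) : resL (extL σ) = σ := by
  funext i; apply Fin.ext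
  simp only [resL]
  rw [extL_val σ (by simpa using Nat.ne_of_lt i.2)]
  have key : ∀ x : Fin (n+1), x = i → (σ x).1 % (n+1) = (σ i).1 := by
    intro x hx; rw [hx, Nat.mod_eq_of_lt (σ i).2]
  exact key _ (Fin.ext (by simp))

lemma ext1_res1 {π : Fin (n+3) → Fin (n+3)} (hinj : Function.Injective π)
    (h0 : π 0 = g1m3 n) (h1 : π 1 = g2m3 n) : ext1 (res1 π) = π := by
  funext j; apply Fin.ext
  rcases Nat.lt_or_ge j.1 2 with hj | hj
  · rcases Nat.lt_or_ge j.1 1 with hj0 | hj0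
    · rw [ext1_val0 _ (by omega)]
      have : j = 0 := Fin.ext (by rw [Fin.val_zero]; omega)
      rw [this, h0]
    · rw [ext1_val1 _ (by omega)]
      have : j = 1 := Fin.ext (by simp; omega)
      rw [this, h1]
  · rw [ext1_val _ hj, res1_val hinj h0 h1]
    exact congrArg (fun t => (π t).1) (Fin.ext (by simp; omega))

lemma res1_ext1 (σ : Fin (n+1) → Fin (n+1)) : res1 (ext1 σ) = σ := by
  funext i; apply Fin.ext
  simp only [res1]
  rw [ext1_val σ (by simp)]
  have key : ∀ x : Fin (n+1), x = i → (σ x).1 % (n+1) = (σ i).1 := by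
    intro x hx; rw [hx, Nat.mod_eq_of_lt (σ i).2]
  exact key _ (Fin.ext (by simp))

end

lemma strictMono3 {α : Type*} [Preorder α] {a b c : α} (h1 : a < b) (h2 : b < c) :
    StrictMono ![a,b,c] := by
  intro x y hxy
  have hfin : ∀ z : Fin 3, z = 0 ∨ z = 1 ∨ z = 2 := by decide
  rcases hfin x with rfl | rfl | rfl <;> rcases hfin y with rfl | rfl | rfl <;>
    first
      | exact absurd hxy (by decide)
      | simpa using h1
      | simpa using h2
      | simpa using h1.trans h2

lemma strictMono4 {α : Type*} [Preorder α] {a b c d : α}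
    (h1 : a < b) (h2 : b < c) (h3 : c < d) : StrictMono ![a,b,c,d] := by
  intro x y hxy
  have hfin : ∀ z : Fin 4, z = 0 ∨ z = 1 ∨ z = 2 ∨ z = 3 := by decide
  rcases hfin x with rfl | rfl | rfl | rfl <;> rcases hfin y with rfl | rfl | rfl | rfl <;>
    first
      | exact absurd hxy (by decide)
      | simpa using h1
      | simpa using h2
      | simpa using h3
      | simpa using h1.trans h2
      | simpa using h2.trans h3
      | simpa using (h1.trans h2).trans h3

lemma contains_of_three {n : ℕ} (π : Fin n → Fin n) (p : Fin 3 → ℕ) (a b c : Fin n)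
    (hab : a < b) (hbc : b < c)
    (h01 : p 0 < p 1 ↔ π a < π b) (h02 : p 0 < p 2 ↔ π a < π c)
    (h12 : p 1 < p 2 ↔ π b < π c) (h10 : p 1 < p 0 ↔ π b < π a)
    (h20 : p 2 < p 0 ↔ π c < π a) (h21 : p 2 < p 1 ↔ π c < π b) :
    Contains π p := by
  refine ⟨![a,b,c], strictMono3 hab hbc, ?_⟩
  intro x y
  have hfin : ∀ z : Fin 3, z = 0 ∨ z = 1 ∨ z = 2 := by decide
  rcases hfin x with rfl | rfl | rfl <;> rcases hfin y with rfl | rfl | rfl <;>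
    simp only [Matrix.cons_val_zero, Matrix.cons_val_one, Matrix.head_cons,
      Matrix.cons_val_two, Matrix.tail_cons] <;>
    first
      | simp
      | exact h01 | exact h02 | exact h12 | exact h10 | exact h20 | exact h21

lemma contains_of_four {n : ℕ} (π : Fin n → Fin n) (p : Fin 4 → ℕ) (a b c d : Fin n)
    (hab : a < b) (hbc : b < c) (hcd : c < d)
    (h01 : p 0 < p 1 ↔ π a < π b) (h02 : p 0 < p 2 ↔ π a < π c)
    (h03 : p 0 < p 3 ↔ π a < π d) (h12 : p 1 < p 2 ↔ π b < π c)
    (h13 : p 1 < p 3 ↔ π b < π d) (h23 : p 2 < p 3 ↔ π c < π d)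
    (h10 : p 1 < p 0 ↔ π b < π a) (h20 : p 2 < p 0 ↔ π c < π a)
    (h30 : p 3 < p 0 ↔ π d < π a) (h21 : p 2 < p 1 ↔ π c < π b)
    (h31 : p 3 < p 1 ↔ π d < π b) (h32 : p 3 < p 2 ↔ π d < π c) :
    Contains π p := by
  refine ⟨![a,b,c,d], strictMono4 hab hbc hcd, ?_⟩
  intro x y
  have hfin : ∀ z : Fin 4, z = 0 ∨ z = 1 ∨ z = 2 ∨ z = 3 := by decide
  rcases hfin x with rfl | rfl | rfl | rfl <;> rcases hfin y with rfl | rfl | rfl | rfl <;>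
    simp only [Matrix.cons_val_zero, Matrix.cons_val_one, Matrix.head_cons,
      Matrix.cons_val_two, Matrix.tail_cons, Matrix.cons_val_three] <;>
    first
      | simp
      | exact h01 | exact h02 | exact h03 | exact h12 | exact h13 | exact h23
      | exact h10 | exact h20 | exact h30 | exact h21 | exact h31 | exact h32

lemma max_pos {n : ℕ} {π : Fin (n+3) → Fin (n+3)} (hπ : π ∈ TSS132 (n+3)) :
    π 0 = fm1 (n+1) ∨ π (fm1 (n+1)) = fm1 (n+1) ∨ (π 1 = fm1 (n+1) ∧ π 0 = g1m3 n) := by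
  obtain ⟨hbij, ha1, ha2, ha3⟩ := hπ
  by_contra hcon
  push_neg at hcon
  obtain ⟨hc0, hcL, hc1⟩ := hcon
  obtain ⟨kk, hk⟩ := hbij.2 (fm1 (n+1))
  have hk0 : kk ≠ 0 := fun h => hc0 (h ▸ hk)
  have hkL : kk ≠ fm1 (n+1) := fun h => hcL (h ▸ hk)
  have hkval : (π kk).1 = n+2 := by rw [hk]
  have h132 : ∀ i l : Fin (n+3), i < kk → kk < l → π l < π i := by
    intro i l hik hkl
    by_contra hno
    have hil : i ≠ l := fun h => absurd (h ▸ hik) (lt_asymm hkl)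
    have hne : π i ≠ π l := fun h => hil (hbij.1 h)
    have hlt : (π i).1 < (π l).1 := by
      have := lt_of_le_of_ne (not_lt.mp hno) hne
      rwa [Fin.lt_def] at this
    have hvi : (π i).1 ≠ n+2 := by
      intro h
      have : π i = π kk := Fin.ext (by omega)
      exact absurd (hbij.1 this) (ne_of_lt hik)
    have hvl : (π l).1 ≠ n+2 := by
      intro h
      have : π l = π kk := Fin.ext (by omega)
      exact absurd (hbij.1 this) (ne_of_gt hkl)
    have hb1 := (π i).2; have hb2 := (π l).2
    exact ha1 (contains_of_three π ![1,3,2] i kk l hik hkl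
      (by rw [Fin.lt_def]; simp [Fin.val_zero, Fin.val_one]; omega) (by rw [Fin.lt_def]; simp [Fin.val_zero, Fin.val_one]; omega)
      (by rw [Fin.lt_def]; simp [Fin.val_zero, Fin.val_one]; omega) (by rw [Fin.lt_def]; simp [Fin.val_zero, Fin.val_one]; omega)
      (by rw [Fin.lt_def]; simp [Fin.val_zero, Fin.val_one]; omega) (by rw [Fin.lt_def]; simp [Fin.val_zero, Fin.val_one]; omega))
  rcases Nat.lt_or_ge kk.1 2 with hk2 | hk2
  · -- kk = 1
    have hkk1 : kk = 1 := by
      rcases Nat.lt_or_ge kk.1 1 with h | h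
      · exact absurd (Fin.ext (by simpa using (by omega : kk.1 = 0))) hk0
      · exact Fin.ext (by simp; omega)
    subst hkk1
    have h1max : π 1 = fm1 (n+1) := hk
    have h0ne : π 0 ≠ g1m3 n := hc1 h1max
    obtain ⟨jj, hjj⟩ := hbij.2 (g1m3 n)
    have hjjval : (π jj).1 = n+1 := by rw [hjj]
    have hjj0 : jj ≠ 0 := fun h => h0ne (h ▸ hjj)
    have hjj1 : jj ≠ 1 := by
      intro h
      rw [h, h1max] at hjj
      have := congrArg Fin.val hjj
      simp at this
    have hjj2 : 2 ≤ jj.1 := by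
      rcases Nat.lt_or_ge jj.1 2 with h | h
      · rcases Nat.lt_or_ge jj.1 1 with h' | h'
        · exact absurd (Fin.ext (by simpa using (by omega : jj.1 = 0))) hjj0
        · exact absurd (Fin.ext (by simp; omega)) hjj1
      · exact h
    have h1jj : (1 : Fin (n+3)) < jj := by rw [Fin.lt_def]; simp; omega
    have h01 : (0 : Fin (n+3)) < 1 := by rw [Fin.lt_def]; simp
    have hv0 : (π 0).1 < n+1 := by
      have hb := (π 0).2
      have hne2 : (π 0).1 ≠ n+2 := by
        intro h
        have : π 0 = π 1 := Fin.ext (by omega)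
        have := congrArg Fin.val (hbij.1 this)
        simp at this
      have hne1 : (π 0).1 ≠ n+1 := by
        intro h
        exact h0ne (Fin.ext (by simpa using h))
      omega
    have hv1 : (π 1).1 = n+2 := hkval
    exact ha1 (contains_of_three π ![1,3,2] 0 1 jj h01 h1jj
      (by rw [Fin.lt_def]; simp [Fin.val_zero, Fin.val_one]; omega) (by rw [Fin.lt_def]; simp [Fin.val_zero, Fin.val_one]; omega)
      (by rw [Fin.lt_def]; simp [Fin.val_zero, Fin.val_one]; omega) (by rw [Fin.lt_def]; simp [Fin.val_zero, Fin.val_one]; omega)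
      (by rw [Fin.lt_def]; simp [Fin.val_zero, Fin.val_one]; omega) (by rw [Fin.lt_def]; simp [Fin.val_zero, Fin.val_one]; omega))
  · -- 2 ≤ kk ≤ n+1
    have hkle : kk.1 ≤ n+1 := by
      have h1 := kk.2
      have h2 : kk.1 ≠ n+2 := fun h => hkL (Fin.ext (by simpa using h))
      omega
    set l : Fin (n+3) := ⟨kk.1+1, by omega⟩ with hl
    have h0k : (0 : Fin (n+3)) < kk := by rw [Fin.lt_def]; simp only [Fin.val_zero]; omega
    have h1k : (1 : Fin (n+3)) < kk := by rw [Fin.lt_def]; simp [Fin.val_one]; omega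
    have h01 : (0 : Fin (n+3)) < 1 := by rw [Fin.lt_def]; simp
    have hkl : kk < l := by rw [Fin.lt_def]; simp [hl]
    have hc0' : (π l).1 < (π 0).1 := by
      have := h132 0 l h0k hkl; rwa [Fin.lt_def] at this
    have hc1' : (π l).1 < (π 1).1 := by
      have := h132 1 l h1k hkl; rwa [Fin.lt_def] at this
    have h01ne : (π 0).1 ≠ (π 1).1 := by
      intro h
      have := congrArg Fin.val (hbij.1 (Fin.ext h : π 0 = π 1))
      simp at this
    have hv0 : (π 0).1 ≠ n+2 := by
      intro h
      have : π 0 = π kk := Fin.ext (by omega)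
      exact absurd (hbij.1 this) (ne_of_lt h0k)
    have hv1 : (π 1).1 ≠ n+2 := by
      intro h
      have : π 1 = π kk := Fin.ext (by omega)
      exact absurd (hbij.1 this) (ne_of_lt h1k)
    have hvl : (π l).1 ≠ n+2 := by
      intro h
      have : π l = π kk := Fin.ext (by omega)
      exact absurd (hbij.1 this) (ne_of_gt hkl)
    have hb0 := (π 0).2; have hb1 := (π 1).2; have hbl := (π l).2
    rcases Nat.lt_or_ge (π 0).1 (π 1).1 with hlt | hge
    · exact ha2 (contains_of_four π ![2,3,4,1] 0 1 kk l h01 h1k hkl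
        (by rw [Fin.lt_def]; simp [Fin.val_zero, Fin.val_one]; omega) (by rw [Fin.lt_def]; simp [Fin.val_zero, Fin.val_one]; omega)
        (by rw [Fin.lt_def]; simp [Fin.val_zero, Fin.val_one]; omega) (by rw [Fin.lt_def]; simp [Fin.val_zero, Fin.val_one]; omega)
        (by rw [Fin.lt_def]; simp [Fin.val_zero, Fin.val_one]; omega) (by rw [Fin.lt_def]; simp [Fin.val_zero, Fin.val_one]; omega)
        (by rw [Fin.lt_def]; simp [Fin.val_zero, Fin.val_one]; omega) (by rw [Fin.lt_def]; simp [Fin.val_zero, Fin.val_one]; omega)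
        (by rw [Fin.lt_def]; simp [Fin.val_zero, Fin.val_one]; omega) (by rw [Fin.lt_def]; simp [Fin.val_zero, Fin.val_one]; omega)
        (by rw [Fin.lt_def]; simp [Fin.val_zero, Fin.val_one]; omega) (by rw [Fin.lt_def]; simp [Fin.val_zero, Fin.val_one]; omega))
    · exact ha3 (contains_of_four π ![3,2,4,1] 0 1 kk l h01 h1k hkl
        (by rw [Fin.lt_def]; simp [Fin.val_zero, Fin.val_one]; omega) (by rw [Fin.lt_def]; simp [Fin.val_zero, Fin.val_one]; omega)
        (by rw [Fin.lt_def]; simp [Fin.val_zero, Fin.val_one]; omega) (by rw [Fin.lt_def]; simp [Fin.val_zero, Fin.val_one]; omega)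
        (by rw [Fin.lt_def]; simp [Fin.val_zero, Fin.val_one]; omega) (by rw [Fin.lt_def]; simp [Fin.val_zero, Fin.val_one]; omega)
        (by rw [Fin.lt_def]; simp [Fin.val_zero, Fin.val_one]; omega) (by rw [Fin.lt_def]; simp [Fin.val_zero, Fin.val_one]; omega)
        (by rw [Fin.lt_def]; simp [Fin.val_zero, Fin.val_one]; omega) (by rw [Fin.lt_def]; simp [Fin.val_zero, Fin.val_one]; omega)
        (by rw [Fin.lt_def]; simp [Fin.val_zero, Fin.val_one]; omega) (by rw [Fin.lt_def]; simp [Fin.val_zero, Fin.val_one]; omega))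


noncomputable def decomp (n : ℕ) :
    ↥(TSS132 (n+3)) ≃ (↥(TSS132 (n+2)) ⊕ ↥(TSS132 (n+2))) ⊕ ↥(TSS132 (n+1)) where
  toFun π :=
    if h0 : π.1 0 = fm1 (n+1) then .inl (.inl ⟨res0 π.1, mem_res0 π.2 h0⟩)
    else if hL : π.1 (fm1 (n+1)) = fm1 (n+1) then .inl (.inr ⟨resL π.1, mem_resL π.2 hL⟩)
    else .inr ⟨res1 π.1, by
      rcases max_pos π.2 with h | h | ⟨h1, h2⟩
      · exact absurd h h0
      · exact absurd h hL
      · exact mem_res1 π.2 h2 h1⟩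
  invFun x := match x with
    | .inl (.inl σ) => ⟨ext0 σ.1, mem_ext0 σ.2⟩
    | .inl (.inr σ) => ⟨extL σ.1, mem_extL σ.2⟩
    | .inr σ => ⟨ext1 σ.1, mem_ext1 σ.2⟩
  left_inv := by
    intro π
    dsimp only
    by_cases h0 : π.1 0 = fm1 (n+1)
    · rw [dif_pos h0]
      exact Subtype.ext (ext0_res0 π.2.1.1 h0)
    · by_cases hL : π.1 (fm1 (n+1)) = fm1 (n+1)
      · rw [dif_neg h0, dif_pos hL]
        exact Subtype.ext (extL_resL π.2.1.1 hL)
      · rw [dif_neg h0, dif_neg hL]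
        obtain ⟨h1, h2⟩ : π.1 1 = fm1 (n+1) ∧ π.1 0 = g1m3 n := by
          rcases max_pos π.2 with h | h | h
          · exact absurd h h0
          · exact absurd h hL
          · exact h
        exact Subtype.ext (ext1_res1 π.2.1.1 h2 h1)
  right_inv := by
    rintro ((σ | σ) | σ)
    · have hcond : ext0 σ.1 0 = fm1 (n+1) := ext0_val0 σ.1 rfl
      show (if h0 : ext0 σ.1 0 = fm1 (n+1) then _ else _) = _
      rw [dif_pos hcond]
      exact congrArg (Sum.inl ∘ Sum.inl) (Subtype.ext (res0_ext0 σ.1))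
    · have hc1 : ¬ extL σ.1 0 = fm1 (n+1) := by
        intro h
        have hv := congrArg Fin.val h
        have := extL_le σ.1 (j := 0) (by simp)
        simp at hv; omega
      have hc2 : extL σ.1 (fm1 (n+1)) = fm1 (n+1) := extL_valL σ.1 rfl
      show (if h0 : extL σ.1 0 = fm1 (n+1) then _ else _) = _
      rw [dif_neg hc1, dif_pos hc2]
      exact congrArg (Sum.inl ∘ Sum.inr) (Subtype.ext (resL_extL σ.1))
    · have hc1 : ¬ ext1 σ.1 0 = fm1 (n+1) := by
        intro h
        have hv := congrArg Fin.val h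
        rw [ext1_val0 σ.1 rfl] at hv
        simp at hv
      have hc2 : ¬ ext1 σ.1 (fm1 (n+1)) = fm1 (n+1) := by
        intro h
        have hv := congrArg Fin.val h
        have := ext1_le σ.1 (j := fm1 (n+1)) (by simp)
        simp at hv; omega
      show (if h0 : ext1 σ.1 0 = fm1 (n+1) then _ else _) = _
      rw [dif_neg hc1, dif_neg hc2]
      exact congrArg Sum.inr (Subtype.ext (res1_ext1 σ.1))

-- Tiling side
lemma tiling_zero_nil (l : List (Bool ⊕ Unit))
    (h : (l.map (Sum.elim (fun _ => 1) (fun _ => 2))).sum = 0) : l = [] := by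
  cases l with
  | nil => rfl
  | cons a t => exfalso; rcases a with b | u <;> simp at h

instance : Unique (Tiling 0) where
  default := ⟨[], by simp⟩
  uniq a := Subtype.ext (tiling_zero_nil a.1 a.2)

lemma tiling_one_char (l : List (Bool ⊕ Unit))
    (h : (l.map (Sum.elim (fun _ => 1) (fun _ => 2))).sum = 1) :
    l = [.inl true] ∨ l = [.inl false] := by
  cases l with
  | nil => simp at h
  | cons a t =>
    rcases a with b | u
    · simp at h
      have := tiling_zero_nil t h
      subst this
      cases b
      · right; rfl
      · left; rfl
    · simp at h; omega

def tilingRec (L : ℕ) : Tiling (L+2) ≃ (Bool × Tiling (L+1)) ⊕ Tiling L where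
  toFun t := match t with
    | ⟨[], h⟩ => absurd h (by simp)
    | ⟨.inl b :: r, h⟩ => .inl (b, ⟨r, by simp at h; omega⟩)
    | ⟨.inr _ :: r, h⟩ => .inr ⟨r, by simp at h; omega⟩
  invFun x := match x with
    | .inl (b, ⟨r, h⟩) => ⟨.inl b :: r, by simp [h]; omega⟩
    | .inr ⟨r, h⟩ => ⟨.inr () :: r, by simp [h]; omega⟩
  left_inv := by
    rintro ⟨(_ | ⟨a | u, r⟩), h⟩
    · exact absurd h (by simp)
    · rfl
    · rfl
  right_inv := by
    rintro ((⟨b, ⟨r, h⟩⟩) | ⟨r, h⟩) <;> rfl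

-- base cases
instance : Unique ↥(TSS132 1) where
  default := ⟨fun i => i, ⟨Function.bijective_id, avoids_of_lt _ _ (by omega),
    avoids_of_lt _ _ (by omega), avoids_of_lt _ _ (by omega)⟩⟩
  uniq a := Subtype.ext (funext fun i => Subsingleton.elim _ _)

def swap2 : Fin 2 → Fin 2 := fun i => ⟨1 - i.1, by omega⟩

lemma swap2_mem : swap2 ∈ TSS132 2 := by
  refine ⟨bij_of_inj ?_, avoids_of_lt _ _ (by omega), avoids_of_lt _ _ (by omega),
    avoids_of_lt _ _ (by omega)⟩
  intro i j hij
  have := congrArg Fin.val hij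
  simp [swap2] at this
  have hi := i.2; have hj := j.2
  exact Fin.ext (by omega)

def e2b : ↥(TSS132 2) ≃ Bool where
  toFun π := decide (π.1 0 = 0)
  invFun b := if b then ⟨fun i => i, ⟨Function.bijective_id, avoids_of_lt _ _ (by omega),
      avoids_of_lt _ _ (by omega), avoids_of_lt _ _ (by omega)⟩⟩
    else ⟨swap2, swap2_mem⟩
  left_inv := by
    intro π
    dsimp only
    have hinj := π.2.1.1
    have h01 : π.1 0 ≠ π.1 1 := by
      intro e
      have := congrArg Fin.val (hinj e)
      simp at this
    have h01v : (π.1 0).1 ≠ (π.1 1).1 := fun e => h01 (Fin.ext e)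
    have hb0 := (π.1 0).2; have hb1 := (π.1 1).2
    by_cases h : π.1 0 = 0
    · have hd : decide (π.1 0 = 0) = true := by simpa using h
      rw [hd, if_pos rfl]
      apply Subtype.ext
      funext i
      have hv0 : (π.1 0).1 = 0 := congrArg Fin.val h
      have hv1 : (π.1 1).1 = 1 := by omega
      rcases (by omega : i.1 = 0 ∨ i.1 = 1) with hi | hi
      · have hi' : i = 0 := Fin.ext (by simpa using hi)
        rw [hi']
        exact h.symm
      · have hi' : i = 1 := Fin.ext (by simpa using hi)
        rw [hi']
        exact Fin.ext (by simpa using hv1.symm)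
    · have hd : decide (π.1 0 = 0) = false := by simpa using h
      rw [hd]
      simp only [Bool.false_eq_true, if_false]
      apply Subtype.ext
      funext i
      have hv0 : (π.1 0).1 = 1 := by
        have : (π.1 0).1 ≠ 0 := fun e => h (Fin.ext (by simpa using e))
        omega
      have hv1 : (π.1 1).1 = 0 := by omega
      rcases (by omega : i.1 = 0 ∨ i.1 = 1) with hi | hi
      · have hi' : i = 0 := Fin.ext (by simpa using hi)
        rw [hi']
        exact Fin.ext (by simp [swap2]; omega)
      · have hi' : i = 1 := Fin.ext (by simpa using hi)
        rw [hi']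
        exact Fin.ext (by simp [swap2]; omega)
  right_inv := by
    intro b
    cases b <;> rfl

def tb : Bool ≃ Tiling 1 where
  toFun b := ⟨[.inl b], by simp⟩
  invFun t := decide (t.1 = [.inl true])
  left_inv b := by cases b <;> simp
  right_inv t := by
    obtain ⟨l, h⟩ := t
    rcases tiling_one_char l h with rfl | rfl
    · exact Subtype.ext (by simp)
    · exact Subtype.ext (by simp)

def e1t : ↥(TSS132 1) ≃ Tiling 0 := Equiv.ofUnique _ _

noncomputable def main : ∀ m : ℕ, ↥(TSS132 (m+1)) ≃ Tiling m
  | 0 => e1t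
  | 1 => e2b.trans tb
  | (m+2) =>
    (decomp m).trans ((((main (m+1)).sumCongr (main (m+1))).sumCongr (main m)).trans
      (((Equiv.boolProdEquivSum (Tiling (m+1))).symm.sumCongr (Equiv.refl (Tiling m))).trans
        (tilingRec m).symm))


theorem stmt_5 (n : ℕ) (hn : 1 ≤ n) : Nonempty (↥(TSS132 n) ≃ Tiling (n-1)) := by
  obtain ⟨m, rfl⟩ : ∃ m, n = m + 1 := ⟨n-1, by omega⟩
  exact ⟨main m⟩
end

section
/- For all n ≥ 1, the number of permutations of {1,...,n} avoiding the patterns 132, 2341, 3241, and 123 equals F_{n+2} - 1, where F_k denotes the k-th Fibonacci number (F_0 = 0, F_1 = 1). -/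
lemma c132 {n : ℕ} (π : Fin n → Fin n) :
    Contains π ![1,3,2] ↔ ∃ a b c : Fin n, a < b ∧ b < c ∧ π a < π c ∧ π c < π b := by
  constructor
  · rintro ⟨f, hf, h⟩
    refine ⟨f 0, f 1, f 2, hf (by decide), hf (by decide), ?_, ?_⟩
    · exact (h 0 2).mp (by decide)
    · exact (h 2 1).mp (by decide)
  · rintro ⟨a, b, c, hab, hbc, h1, h2⟩
    refine ⟨![a,b,c], ?_, ?_⟩
    · intro i j hij
      simp only [Fin.lt_def] at hab hbc ⊢
      fin_cases i <;> fin_cases j <;> simp_all <;> omega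
    · intro i j
      simp only [Fin.lt_def] at h1 h2 ⊢
      fin_cases i <;> fin_cases j <;> simp <;> omega

lemma c123 {n : ℕ} (π : Fin n → Fin n) :
    Contains π ![1,2,3] ↔ ∃ a b c : Fin n, a < b ∧ b < c ∧ π a < π b ∧ π b < π c := by
  constructor
  · rintro ⟨f, hf, h⟩
    refine ⟨f 0, f 1, f 2, hf (by decide), hf (by decide), ?_, ?_⟩
    · exact (h 0 1).mp (by norm_num)
    · exact (h 1 2).mp (by decide)
  · rintro ⟨a, b, c, hab, hbc, h1, h2⟩
    refine ⟨![a,b,c], ?_, ?_⟩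
    · intro i j hij
      simp only [Fin.lt_def] at hab hbc ⊢
      fin_cases i <;> fin_cases j <;> simp_all <;> omega
    · intro i j
      simp only [Fin.lt_def] at h1 h2 ⊢
      fin_cases i <;> fin_cases j <;> simp <;> omega

lemma c3241 {n : ℕ} (π : Fin n → Fin n) :
    Contains π ![3,2,4,1] ↔ ∃ a b c d : Fin n, a < b ∧ b < c ∧ c < d ∧
      π b < π a ∧ π a < π c ∧ π d < π b := by
  constructor
  · rintro ⟨f, hf, h⟩
    refine ⟨f 0, f 1, f 2, f 3, hf (by decide), hf (by decide), hf (by decide), ?_, ?_, ?_⟩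
    · exact (h 1 0).mp (by norm_num)
    · exact (h 0 2).mp (by decide)
    · exact (h 3 1).mp (by decide)
  · rintro ⟨a, b, c, d, hab, hbc, hcd, h1, h2, h3⟩
    refine ⟨![a,b,c,d], ?_, ?_⟩
    · intro i j hij
      simp only [Fin.lt_def] at hab hbc hcd ⊢
      fin_cases i <;> fin_cases j <;> simp_all <;> omega
    · intro i j
      simp only [Fin.lt_def] at h1 h2 h3 ⊢
      fin_cases i <;> fin_cases j <;> simp <;> omega

lemma c2341 {n : ℕ} (π : Fin n → Fin n) :
    Contains π ![2,3,4,1] ↔ ∃ a b c d : Fin n, a < b ∧ b < c ∧ c < d ∧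
      π a < π b ∧ π b < π c ∧ π d < π a := by
  constructor
  · rintro ⟨f, hf, h⟩
    refine ⟨f 0, f 1, f 2, f 3, hf (by decide), hf (by decide), hf (by decide), ?_, ?_, ?_⟩
    · exact (h 0 1).mp (by norm_num)
    · exact (h 1 2).mp (by decide)
    · exact (h 3 0).mp (by decide)
  · rintro ⟨a, b, c, d, hab, hbc, hcd, h1, h2, h3⟩
    refine ⟨![a,b,c,d], ?_, ?_⟩
    · intro i j hij
      simp only [Fin.lt_def] at hab hbc hcd ⊢
      fin_cases i <;> fin_cases j <;> simp_all <;> omega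
    · intro i j
      simp only [Fin.lt_def] at h1 h2 h3 ⊢
      fin_cases i <;> fin_cases j <;> simp <;> omega

def Sset (n : ℕ) : Set (Fin n → Fin n) := {π ∈ TSS132 n | Avoids π ![1,2,3]}

def extA {m : ℕ} (σ : Fin m → Fin m) : Fin (m+1) → Fin (m+1) :=
  Fin.cons (Fin.last m) (fun i => (σ i).castSucc)

def extB {m : ℕ} (σ : Fin m → Fin m) : Fin (m+2) → Fin (m+2) :=
  Fin.cons ((Fin.last m).castSucc)
    (Fin.cons (Fin.last (m+1)) (fun i => ((σ i).castSucc).castSucc))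

lemma lemma1 {n : ℕ} {π : Fin n → Fin n} (hπ : π ∈ Sset n) :
    ∀ a b c : Fin n, a < b → b < c → π a < π b → π a < π c → False := by
  intro a b c hab hbc h1 h2
  rcases lt_trichotomy (π b) (π c) with h | h | h
  · exact hπ.2 ((c123 π).mpr ⟨a, b, c, hab, hbc, h1, h⟩)
  · exact absurd (hπ.1.1.1 h) (by omega)
  · exact hπ.1.2.1 ((c132 π).mpr ⟨a, b, c, hab, hbc, h2, h⟩)

lemma transferA {m k : ℕ} (σ : Fin m → Fin m) (p : Fin (k+3) → ℕ) (hp : p 0 < p 2) :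
    Contains (Fin.cons (Fin.last m) (fun i => (σ i).castSucc) : Fin (m+1) → Fin (m+1)) p
      ↔ Contains σ p := by
  set π : Fin (m+1) → Fin (m+1) := Fin.cons (Fin.last m) (fun i => (σ i).castSucc) with hπ
  constructor
  · rintro ⟨f, hf, h⟩
    have hf0 : f 0 ≠ 0 := by
      intro h0
      have := (h 0 2).mp hp
      rw [h0] at this
      simp only [π, Fin.cons_zero] at this
      exact absurd (Fin.le_last _) (not_le.mpr this)
    have hfi : ∀ i, (f i).val ≠ 0 := by
      intro i
      rcases eq_or_ne i 0 with rfl | hi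
      · exact fun h => hf0 (Fin.ext (by rw [h]; simp))
      · have : f 0 < f i := hf (by exact Fin.pos_iff_ne_zero.mpr hi)
        have h0 : (f 0).val ≠ 0 := fun h => hf0 (Fin.ext (by rw [h]; simp))
        omega
    refine ⟨fun i => ⟨(f i).val - 1, by have := (f i).isLt; have := hfi i; omega⟩, ?_, ?_⟩
    · intro i j hij
      have := hf hij
      simp only [Fin.lt_def] at this ⊢
      have := hfi i
      omega
    · intro i j
      have key : ∀ i, π (f i) = ((σ ⟨(f i).val - 1, by have := (f i).isLt; have := hfi i; omega⟩).castSucc) := by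
        intro i
        have : f i = Fin.succ ⟨(f i).val - 1, by have := (f i).isLt; have := hfi i; omega⟩ := by
          simp [Fin.ext_iff]; have := hfi i; omega
        rw [congrArg π this]
        exact Fin.cons_succ (α := fun _ => Fin (m+1)) (Fin.last m) (fun i => (σ i).castSucc) _
      rw [h i j, key i, key j]
      simp [Fin.castSucc_lt_castSucc_iff]
  · rintro ⟨f, hf, h⟩
    refine ⟨fun i => (f i).succ, fun i j hij => by simpa using hf hij, ?_⟩
    intro i j
    rw [h i j]
    simp [π, Fin.cons_succ, Fin.castSucc_lt_castSucc_iff]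

lemma transferB {m k : ℕ} (σ : Fin m → Fin m) (p : Fin (k+3) → ℕ) (hp : p 0 < p 2) :
    Contains (Fin.cons ((Fin.last m).castSucc)
      (Fin.cons (Fin.last (m+1)) (fun i => ((σ i).castSucc).castSucc)) : Fin (m+2) → Fin (m+2)) p
      ↔ Contains σ p := by
  set π : Fin (m+2) → Fin (m+2) := Fin.cons ((Fin.last m).castSucc)
      (Fin.cons (Fin.last (m+1)) (fun i => ((σ i).castSucc).castSucc)) with hπ
  have key : ∀ x : Fin (m+2), ∀ hx : 2 ≤ x.val,
      π x = ((σ ⟨x.val - 2, by have := x.isLt; omega⟩).castSucc).castSucc := by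
    intro x hx
    have hx2 : x = ((⟨x.val - 2, by have := x.isLt; omega⟩ : Fin m).succ).succ := by
      simp [Fin.ext_iff]; omega
    rw [congrArg π hx2, hπ, Fin.cons_succ, Fin.cons_succ]
  have key0 : (π 0).val = m := by
    rw [hπ, Fin.cons_zero]; simp
  have key1 : (π 1).val = m + 1 := by
    have e1 : (1 : Fin (m+2)) = Fin.succ 0 := rfl
    rw [congrArg π e1, hπ, Fin.cons_succ, Fin.cons_zero]; simp
  constructor
  · rintro ⟨f, hf, h⟩
    have hval : ∀ i, 2 ≤ (f i).val := by
      have h02 := (h 0 2).mp hp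
      have hf2 : 2 ≤ (f 2).val := by
        have h01 : f 0 < f 1 := hf (by simp [Fin.lt_def])
        have h12 : f 1 < f 2 := hf (by
          rw [Fin.lt_def]
          have : (1 : Fin (k+3)).val = 1 := rfl
          have : (2 : Fin (k+3)).val = 2 := rfl
          omega)
        simp only [Fin.lt_def] at h01 h12
        omega
      have hπf2 : (π (f 2)).val < m := by
        rw [key (f 2) hf2]
        simp
      have hf0 : 2 ≤ (f 0).val := by
        by_contra hc
        simp only [Fin.lt_def] at h02
        rcases (by omega : (f 0).val = 0 ∨ (f 0).val = 1) with h0 | h0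
        · have e : f 0 = 0 := Fin.ext (by simpa using h0)
          rw [e] at h02; omega
        · have e : f 0 = 1 := Fin.ext (by simpa using h0)
          rw [e] at h02; omega
      intro i
      rcases eq_or_ne i 0 with rfl | hi
      · exact hf0
      · have : f 0 < f i := hf (Fin.pos_iff_ne_zero.mpr hi)
        simp only [Fin.lt_def] at this
        omega
    refine ⟨fun i => ⟨(f i).val - 2, by have := (f i).isLt; have := hval i; omega⟩, ?_, ?_⟩
    · intro i j hij
      have := hf hij
      simp only [Fin.lt_def] at this ⊢
      have := hval i
      omega
    · intro i j
      rw [h i j, key (f i) (hval i), key (f j) (hval j)]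
      simp [Fin.castSucc_lt_castSucc_iff]
  · rintro ⟨f, hf, h⟩
    refine ⟨fun i => ((f i).succ).succ, fun i j hij => by simpa using hf hij, ?_⟩
    intro i j
    rw [h i j]
    have e : ∀ i, π ((f i).succ).succ = ((σ (f i)).castSucc).castSucc := by
      intro i
      rw [hπ, Fin.cons_succ, Fin.cons_succ]
    rw [e i, e j]
    simp [Fin.castSucc_lt_castSucc_iff]

def desc {m : ℕ} : Fin (m+3) → Fin (m+3) :=
  fun i => if i.val = m+2 then i else ⟨m+1 - i.val, by omega⟩

lemma desc_last {m : ℕ} : (desc (Fin.last (m+2))) = Fin.last (m+2) := by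
  simp [desc, Fin.last]

lemma desc_val {m : ℕ} (i : Fin (m+3)) (h : i.val ≤ m+1) : (desc i).val = m+1 - i.val := by
  unfold desc
  rw [if_neg (by omega)]

lemma desc_lt {m : ℕ} {a b : Fin (m+3)} (hab : a < b) :
    desc a < desc b ↔ b = Fin.last (m+2) := by
  simp only [Fin.lt_def] at hab
  constructor
  · intro h
    by_contra hb
    have hbv : b.val ≤ m + 1 := by
      have := b.isLt
      simp only [Fin.ext_iff, Fin.val_last] at hb
      omega
    have hav : a.val ≤ m + 1 := by omega
    rw [Fin.lt_def, desc_val a hav, desc_val b hbv] at h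
    omega
  · intro hb
    subst hb
    rw [desc_last, Fin.lt_def]
    have hav : a.val ≤ m + 1 := by
      have := hab; simp only [Fin.val_last] at this; omega
    rw [desc_val a hav]
    simp [Fin.last]
    omega

lemma desc_bijective {m : ℕ} : Function.Bijective (desc : Fin (m+3) → Fin (m+3)) := by
  rw [← Finite.injective_iff_bijective]
  intro a b h
  have ha := a.isLt
  have hb := b.isLt
  rw [Fin.ext_iff]
  by_cases h1 : a.val = m+2 <;> by_cases h2 : b.val = m+2
  · omega
  · have := desc_val b (by omega)
    have e : (desc a).val = a.val := by simp [desc, h1]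
    rw [Fin.ext_iff] at h; omega
  · have := desc_val a (by omega)
    have e : (desc b).val = b.val := by simp [desc, h2]
    rw [Fin.ext_iff] at h; omega
  · have := desc_val a (by omega)
    have := desc_val b (by omega)
    rw [Fin.ext_iff] at h; omega

lemma desc_mem {m : ℕ} : (desc : Fin (m+3) → Fin (m+3)) ∈ Sset (m+3) := by
  have hlt : ∀ {a b : Fin (m+3)}, a < b → desc a < desc b → b = Fin.last (m+2) :=
    fun hab h => (desc_lt hab).mp h
  refine ⟨⟨desc_bijective, ?_, ?_, ?_⟩, ?_⟩
  · rw [Avoids, c132]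
    rintro ⟨a, b, c, hab, hbc, h1, h2⟩
    have hc := hlt (hab.trans hbc) h1
    rw [hc, desc_last] at h2
    exact absurd (Fin.le_last (desc b)) (not_le.mpr h2)
  · rw [Avoids, c2341]
    rintro ⟨a, b, c, d, hab, hbc, hcd, h1, h2, h3⟩
    have hc := hlt hbc h2
    rw [hc] at hcd
    exact absurd (Fin.le_last d) (not_le.mpr hcd)
  · rw [Avoids, c3241]
    rintro ⟨a, b, c, d, hab, hbc, hcd, h1, h2, h3⟩
    have hc := hlt (hab.trans hbc) h2
    rw [hc] at hcd
    exact absurd (Fin.le_last d) (not_le.mpr hcd)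
  · rw [Avoids, c123]
    rintro ⟨a, b, c, hab, hbc, h1, h2⟩
    have hb := hlt hab h1
    have hc := hlt hbc h2
    rw [hb, hc] at hbc
    exact lt_irrefl _ hbc

lemma extA_zero {m : ℕ} (σ : Fin m → Fin m) : extA σ 0 = Fin.last m := rfl

lemma extA_succ {m : ℕ} (σ : Fin m → Fin m) (i : Fin m) :
    extA σ i.succ = (σ i).castSucc := by
  unfold extA; rw [Fin.cons_succ]

lemma extB_zero {m : ℕ} (σ : Fin m → Fin m) : extB σ 0 = (Fin.last m).castSucc := rfl

lemma extB_one' {m : ℕ} (σ : Fin m → Fin m) :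
    extB σ (Fin.succ 0) = Fin.last (m+1) := by
  unfold extB; rw [Fin.cons_succ, Fin.cons_zero]

lemma extB_one {m : ℕ} (σ : Fin m → Fin m) : extB σ 1 = Fin.last (m+1) := extB_one' σ

lemma extB_succ {m : ℕ} (σ : Fin m → Fin m) (i : Fin m) :
    extB σ i.succ.succ = ((σ i).castSucc).castSucc := by
  unfold extB; rw [Fin.cons_succ, Fin.cons_succ]

lemma extA_inj_iff {m : ℕ} (σ : Fin m → Fin m) :
    Function.Injective (extA σ) ↔ Function.Injective σ := by
  constructor
  · intro h a b hab
    have : extA σ a.succ = extA σ b.succ := by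
      rw [extA_succ, extA_succ, hab]
    exact Fin.succ_injective _ (h this)
  · intro h x y hxy
    rcases Fin.eq_zero_or_eq_succ x with rfl | ⟨x', rfl⟩ <;>
      rcases Fin.eq_zero_or_eq_succ y with rfl | ⟨y', rfl⟩
    · rfl
    · rw [extA_zero, extA_succ] at hxy
      exact absurd hxy.symm (Fin.castSucc_lt_last (σ y')).ne
    · rw [extA_zero, extA_succ] at hxy
      exact absurd hxy (Fin.castSucc_lt_last (σ x')).ne
    · rw [extA_succ, extA_succ] at hxy
      rw [h (Fin.castSucc_injective _ hxy)]

lemma extB_inj_iff {m : ℕ} (σ : Fin m → Fin m) :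
    Function.Injective (extB σ) ↔ Function.Injective σ := by
  constructor
  · intro h a b hab
    have : extB σ a.succ.succ = extB σ b.succ.succ := by
      rw [extB_succ, extB_succ, hab]
    exact Fin.succ_injective _ (Fin.succ_injective _ (h this))
  · intro h x y hxy
    have hσ : ∀ i : Fin m, (σ i).val < m := fun i => (σ i).isLt
    rcases Fin.eq_zero_or_eq_succ x with rfl | ⟨x', rfl⟩ <;>
      rcases Fin.eq_zero_or_eq_succ y with rfl | ⟨y', rfl⟩
    · rfl
    · rcases Fin.eq_zero_or_eq_succ y' with rfl | ⟨y'', rfl⟩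
      · rw [extB_zero, extB_one', Fin.ext_iff] at hxy
        simp at hxy
      · rw [extB_zero, extB_succ, Fin.ext_iff] at hxy
        simp at hxy
        exact absurd hxy (by have := hσ y''; omega)
    · rcases Fin.eq_zero_or_eq_succ x' with rfl | ⟨x'', rfl⟩
      · rw [extB_zero, extB_one', Fin.ext_iff] at hxy
        simp at hxy
      · rw [extB_zero, extB_succ, Fin.ext_iff] at hxy
        simp at hxy
        exact absurd hxy.symm (by have := hσ x''; omega)
    · rcases Fin.eq_zero_or_eq_succ x' with rfl | ⟨x'', rfl⟩ <;>
        rcases Fin.eq_zero_or_eq_succ y' with rfl | ⟨y'', rfl⟩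
      · rfl
      · rw [extB_one', extB_succ, Fin.ext_iff] at hxy
        simp at hxy
        exact absurd hxy (by have := hσ y''; omega)
      · rw [extB_one', extB_succ, Fin.ext_iff] at hxy
        simp at hxy
        exact absurd hxy.symm (by have := hσ x''; omega)
      · rw [extB_succ, extB_succ] at hxy
        rw [h (Fin.castSucc_injective _ (Fin.castSucc_injective _ hxy))]

lemma extA_mem {m : ℕ} (σ : Fin m → Fin m) : extA σ ∈ Sset (m+1) ↔ σ ∈ Sset m := by
  have hb : Function.Bijective (extA σ) ↔ Function.Bijective σ := by
    rw [← Finite.injective_iff_bijective, ← Finite.injective_iff_bijective]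
    exact extA_inj_iff σ
  have h1 := transferA (k := 0) σ ![1,3,2] (by decide)
  have h2 := transferA (k := 1) σ ![2,3,4,1] (by decide)
  have h3 := transferA (k := 1) σ ![3,2,4,1] (by decide)
  have h4 := transferA (k := 0) σ ![1,2,3] (by decide)
  constructor
  · rintro ⟨⟨b, a1, a2, a3⟩, a4⟩
    exact ⟨⟨hb.mp b, fun c => a1 (h1.mpr c), fun c => a2 (h2.mpr c),
      fun c => a3 (h3.mpr c)⟩, fun c => a4 (h4.mpr c)⟩
  · rintro ⟨⟨b, a1, a2, a3⟩, a4⟩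
    exact ⟨⟨hb.mpr b, fun c => a1 (h1.mp c), fun c => a2 (h2.mp c),
      fun c => a3 (h3.mp c)⟩, fun c => a4 (h4.mp c)⟩

lemma extB_mem {m : ℕ} (σ : Fin m → Fin m) : extB σ ∈ Sset (m+2) ↔ σ ∈ Sset m := by
  have hb : Function.Bijective (extB σ) ↔ Function.Bijective σ := by
    rw [← Finite.injective_iff_bijective, ← Finite.injective_iff_bijective]
    exact extB_inj_iff σ
  have h1 := transferB (k := 0) σ ![1,3,2] (by decide)
  have h2 := transferB (k := 1) σ ![2,3,4,1] (by decide)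
  have h3 := transferB (k := 1) σ ![3,2,4,1] (by decide)
  have h4 := transferB (k := 0) σ ![1,2,3] (by decide)
  constructor
  · rintro ⟨⟨b, a1, a2, a3⟩, a4⟩
    exact ⟨⟨hb.mp b, fun c => a1 (h1.mpr c), fun c => a2 (h2.mpr c),
      fun c => a3 (h3.mpr c)⟩, fun c => a4 (h4.mpr c)⟩
  · rintro ⟨⟨b, a1, a2, a3⟩, a4⟩
    exact ⟨⟨hb.mpr b, fun c => a1 (h1.mp c), fun c => a2 (h2.mp c),
      fun c => a3 (h3.mp c)⟩, fun c => a4 (h4.mp c)⟩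

def retrA {m : ℕ} (π : Fin (m+1) → Fin (m+1)) : Fin m → Fin m :=
  fun i => if h : (π i.succ).val < m then ⟨(π i.succ).val, h⟩ else i

def retrB {m : ℕ} (π : Fin (m+2) → Fin (m+2)) : Fin m → Fin m :=
  fun i => if h : (π i.succ.succ).val < m then ⟨(π i.succ.succ).val, h⟩ else i

lemma retrA_eq {m : ℕ} (π : Fin (m+1) → Fin (m+1)) (hinj : Function.Injective π)
    (h0 : π 0 = Fin.last m) : extA (retrA π) = π := by
  have hlt : ∀ i : Fin m, (π i.succ).val < m := by
    intro i
    have e1 : π i.succ ≠ Fin.last m := by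
      rw [← h0]; intro h; exact absurd (hinj h) (Fin.succ_ne_zero i)
    have e2 := (π i.succ).isLt
    simp only [Ne, Fin.ext_iff, Fin.val_last] at e1
    omega
  funext x
  rcases Fin.eq_zero_or_eq_succ x with rfl | ⟨x', rfl⟩
  · rw [show extA (retrA π) 0 = Fin.last m from rfl, h0]
  · show Fin.cons _ _ _ = _
    rw [Fin.cons_succ]
    rw [Fin.ext_iff]
    simp only [retrA, dif_pos (hlt x')]
    simp

lemma retrB_eq {m : ℕ} (π : Fin (m+2) → Fin (m+2)) (hinj : Function.Injective π)
    (h0 : (π 0).val = m) (h1 : π 1 = Fin.last (m+1)) : extB (retrB π) = π := by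
  have hlt : ∀ i : Fin m, (π i.succ.succ).val < m := by
    intro i
    have e1 : π i.succ.succ ≠ Fin.last (m+1) := by
      rw [← h1]; intro h
      have := hinj h
      rw [Fin.ext_iff] at this
      simp at this
    have e0 : π i.succ.succ ≠ π 0 := by
      intro h
      have := hinj h
      rw [Fin.ext_iff] at this
      simp at this
    have := (π i.succ.succ).isLt
    simp only [Ne, Fin.ext_iff, Fin.val_last] at e0 e1
    omega
  funext x
  rcases Fin.eq_zero_or_eq_succ x with rfl | ⟨x', rfl⟩
  · show (Fin.last m).castSucc = π 0
    rw [Fin.ext_iff]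
    simpa using h0.symm
  · rcases Fin.eq_zero_or_eq_succ x' with rfl | ⟨x'', rfl⟩
    · show Fin.cons _ _ _ = _
      rw [Fin.cons_succ, Fin.cons_zero]
      exact h1.symm
    · show Fin.cons _ _ _ = _
      rw [Fin.cons_succ, Fin.cons_succ]
      rw [Fin.ext_iff]
      simp only [retrB, dif_pos (hlt x'')]
      simp

lemma claimI {m : ℕ} {π : Fin (m+3) → Fin (m+3)} (hπ : π ∈ Sset (m+3))
    (h0 : π 0 ≠ Fin.last (m+2)) : (π 0).val = m+1 := by
  by_contra hc
  have h0v : (π 0).val ≤ m := by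
    have := (π 0).isLt
    simp only [Ne, Fin.ext_iff, Fin.val_last] at h0
    omega
  obtain ⟨a, ha⟩ := hπ.1.1.2 (Fin.last (m+2))
  obtain ⟨b, hb⟩ := hπ.1.1.2 ⟨m+1, by omega⟩
  have ha0 : a ≠ 0 := by
    intro h; rw [h] at ha; rw [ha] at h0; exact h0 rfl
  have hb0 : b ≠ 0 := by
    intro h; rw [h] at hb; rw [hb] at h0v; simp at h0v
  have hab : a ≠ b := by
    intro h; rw [h, hb] at ha
    rw [Fin.ext_iff] at ha; simp [Fin.last] at ha
  have hπ0a : π 0 < π a := by rw [ha, Fin.lt_def]; simpa using by omega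
  have hπ0b : π 0 < π b := by rw [hb, Fin.lt_def]; simpa using by omega
  rcases lt_or_gt_of_ne hab with h | h
  · exact lemma1 hπ 0 a b (Fin.pos_iff_ne_zero.mpr ha0) h hπ0a hπ0b
  · exact lemma1 hπ 0 b a (Fin.pos_iff_ne_zero.mpr hb0) h hπ0b hπ0a

lemma claimII {m : ℕ} {π : Fin (m+3) → Fin (m+3)} (hπ : π ∈ Sset (m+3))
    (h0 : (π 0).val = m+1) (h1 : π 1 ≠ Fin.last (m+2)) : (π 1).val = m := by
  have hinj := hπ.1.1.1
  have h1l : (π 1).val ≠ m+2 := by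
    simp only [Ne, Fin.ext_iff, Fin.val_last] at h1
    exact h1
  have h10 : (π 1).val ≠ m+1 := by
    intro h
    have : π 1 = π 0 := Fin.ext (by rw [h, h0])
    have := hinj this
    rw [Fin.ext_iff] at this
    simp at this
  by_contra hc
  have h1v : (π 1).val + 1 ≤ m := by
    have := (π 1).isLt
    omega
  obtain ⟨a, ha⟩ := hπ.1.1.2 (Fin.last (m+2))
  obtain ⟨b, hb⟩ := hπ.1.1.2 ⟨m, by omega⟩
  have hav : (π a).val = m + 2 := by rw [ha]; rfl
  have hbv : (π b).val = m := by rw [hb]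
  have ha1 : a ≠ 1 := fun h => by rw [h] at ha; exact h1 ha
  have ha0 : a ≠ 0 := by
    intro h; rw [h] at hav; omega
  have hb1 : b ≠ 1 := by
    intro h; rw [h] at hbv; omega
  have hb0 : b ≠ 0 := by
    intro h; rw [h] at hbv; omega
  have hab : a ≠ b := by
    intro h; rw [h] at hav; omega
  have h1a : (1 : Fin (m+3)) < a := by
    rw [Fin.lt_def]
    simp only [Fin.val_one]
    simp only [Ne, Fin.ext_iff, Fin.val_zero, Fin.val_one] at ha0 ha1
    have := a.isLt; omega
  have h1b : (1 : Fin (m+3)) < b := by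
    rw [Fin.lt_def]
    simp only [Fin.val_one]
    simp only [Ne, Fin.ext_iff, Fin.val_zero, Fin.val_one] at hb0 hb1
    have := b.isLt; omega
  have hπ1a : π 1 < π a := by rw [Fin.lt_def]; omega
  have hπ1b : π 1 < π b := by rw [Fin.lt_def]; omega
  rcases lt_or_gt_of_ne hab with h | h
  · exact lemma1 hπ 1 a b h1a h hπ1a hπ1b
  · exact lemma1 hπ 1 b a h1b h hπ1b hπ1a

lemma forcing {m : ℕ} {π : Fin (m+3) → Fin (m+3)} (hπ : π ∈ Sset (m+3))
    (h0 : (π 0).val = m+1) (h1 : (π 1).val = m) : π = desc := by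
  have hinj := hπ.1.1.1
  -- (a) the maximum is at the last position
  have hlast : π (Fin.last (m+2)) = Fin.last (m+2) := by
    obtain ⟨a, ha⟩ := hπ.1.1.2 (Fin.last (m+2))
    have hav : (π a).val = m+2 := by rw [ha]; rfl
    suffices h : a = Fin.last (m+2) by rw [h] at ha; exact ha
    by_contra hc
    have hal : a.val ≤ m+1 := by
      have := a.isLt
      simp only [Ne, Fin.ext_iff, Fin.val_last] at hc
      omega
    have ha0 : a.val ≠ 0 := by
      intro h
      have : a = 0 := Fin.ext h
      rw [this] at hav; omega
    have ha1 : a.val ≠ 1 := by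
      intro h
      have : a = 1 := Fin.ext (by rw [h]; rfl)
      rw [this] at hav; omega
    have hLv : (π (Fin.last (m+2))).val + 1 ≤ m := by
      have hne1 : π (Fin.last (m+2)) ≠ π a := by
        intro h
        have := hinj h
        rw [Fin.ext_iff, Fin.val_last] at this
        omega
      have hne2 : π (Fin.last (m+2)) ≠ π 0 := by
        intro h
        have := hinj h
        rw [Fin.ext_iff, Fin.val_last] at this
        simp at this
      have hne3 : π (Fin.last (m+2)) ≠ π 1 := by
        intro h
        have := hinj h
        rw [Fin.ext_iff, Fin.val_last, Fin.val_one] at this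
        omega
      rw [Ne, Fin.ext_iff] at hne1 hne2 hne3
      have := (π (Fin.last (m+2))).isLt
      omega
    apply hπ.1.2.2.2
    rw [c3241]
    refine ⟨0, 1, a, Fin.last (m+2), ?_, ?_, ?_, ?_, ?_, ?_⟩
    · rw [Fin.lt_def, Fin.val_one]; simp
    · rw [Fin.lt_def, Fin.val_one]; omega
    · rw [Fin.lt_def, Fin.val_last]; omega
    · rw [Fin.lt_def]; omega
    · rw [Fin.lt_def]; omega
    · rw [Fin.lt_def]; omega
  -- (b) strictly decreasing before the last position
  have hdec : ∀ i j : Fin (m+3), i < j → j ≠ Fin.last (m+2) → (π j).val < (π i).val := by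
    intro i j hij hjl
    rcases lt_trichotomy ((π j).val) ((π i).val) with h | h | h
    · exact h
    · exact absurd (hinj (Fin.ext h.symm)) (ne_of_lt hij)
    · exfalso
      have hjlast : j < Fin.last (m+2) := by
        rw [Fin.lt_def, Fin.val_last]
        have := j.isLt
        simp only [Ne, Fin.ext_iff, Fin.val_last] at hjl
        omega
      have hπil : π i < π (Fin.last (m+2)) := by
        rw [hlast, Fin.lt_def, Fin.val_last]
        have : π i ≠ π (Fin.last (m+2)) := fun hh =>
          absurd (hinj hh) (ne_of_lt (hij.trans hjlast))
        rw [hlast, Ne, Fin.ext_iff, Fin.val_last] at this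
        have := (π i).isLt
        omega
      exact lemma1 hπ i j (Fin.last (m+2)) hij hjlast (Fin.lt_def.mpr h) hπil
  -- (c) upper bound
  have hub : ∀ k : ℕ, k ≤ m+1 → ∀ i : Fin (m+3), i.val = k → (π i).val ≤ m+1-k := by
    intro k
    induction k with
    | zero =>
      intro _ i hi
      have : i = 0 := Fin.ext hi
      rw [this]; omega
    | succ k ih =>
      intro hk i hi
      obtain ⟨z, hz⟩ : ∃ z : Fin (m+3), z.val = k := ⟨⟨k, by omega⟩, rfl⟩
      have step := hdec z i (by rw [Fin.lt_def, hz]; omega)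
        (by simp only [Ne, Fin.ext_iff, Fin.val_last]; omega)
      have := ih (by omega) z hz
      omega
  -- (c') lower bound
  have hlb : ∀ j : ℕ, j ≤ m+1 → ∀ i : Fin (m+3), i.val = m+1-j → j ≤ (π i).val := by
    intro j
    induction j with
    | zero => intro _ i hi; omega
    | succ j ih =>
      intro hj i hi
      obtain ⟨z, hz⟩ : ∃ z : Fin (m+3), z.val = m+1-j := ⟨⟨m+1-j, by omega⟩, rfl⟩
      have step := hdec i z (by rw [Fin.lt_def, hz]; omega)
        (by simp only [Ne, Fin.ext_iff, Fin.val_last]; omega)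
      have := ih (by omega) z hz
      omega
  funext i
  by_cases hi : i.val = m+2
  · have : i = Fin.last (m+2) := Fin.ext hi
    rw [this, hlast]
    unfold desc
    rw [if_pos (by rw [Fin.val_last])]
  · have hi' : i.val ≤ m+1 := by have := i.isLt; omega
    have h1' := hub i.val hi' i rfl
    have h2' := hlb (m+1-i.val) (by omega) i (by omega)
    rw [Fin.ext_iff, desc_val i hi']
    omega

lemma partition (m : ℕ) :
    Sset (m+3) = extA '' Sset (m+2) ∪ (extB '' Sset (m+1) ∪ {desc}) := by
  ext π
  constructor
  · intro hπ
    have hinj : Function.Injective π := hπ.1.1.1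
    by_cases h0 : π 0 = Fin.last (m+2)
    · left
      exact ⟨retrA π, (extA_mem _).mp (by rw [retrA_eq π hinj h0]; exact hπ),
        retrA_eq π hinj h0⟩
    · have h0v := claimI hπ h0
      by_cases h1 : π 1 = Fin.last (m+2)
      · right; left
        exact ⟨retrB π, (extB_mem _).mp (by rw [retrB_eq π hinj h0v h1]; exact hπ),
          retrB_eq π hinj h0v h1⟩
      · right; right
        exact forcing hπ h0v (claimII hπ h0v h1)
  · rintro (⟨σ, hσ, rfl⟩ | ⟨σ, hσ, rfl⟩ | h)
    · exact (extA_mem σ).mpr hσ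
    · exact (extB_mem σ).mpr hσ
    · rw [Set.mem_singleton_iff] at h
      rw [h]
      exact desc_mem

lemma extA_injective {m : ℕ} : Function.Injective (extA : (Fin m → Fin m) → _) := by
  intro σ τ h
  funext i
  have := congrFun h i.succ
  rw [extA_succ, extA_succ] at this
  exact Fin.castSucc_injective _ this

lemma extB_injective {m : ℕ} : Function.Injective (extB : (Fin m → Fin m) → _) := by
  intro σ τ h
  funext i
  have := congrFun h i.succ.succ
  rw [extB_succ, extB_succ] at this
  exact Fin.castSucc_injective _ (Fin.castSucc_injective _ this)

lemma card_step (m : ℕ) :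
    (Sset (m+3)).ncard = (Sset (m+2)).ncard + (Sset (m+1)).ncard + 1 := by
  have hAB : Disjoint (extA '' Sset (m+2)) (extB '' Sset (m+1)) := by
    rw [Set.disjoint_left]
    rintro π ⟨σ, _, rfl⟩ ⟨τ, _, hτ⟩
    have := congrFun hτ 0
    have e1 : extB τ 0 = (Fin.last (m+1)).castSucc := rfl
    have e2 : extA σ 0 = Fin.last (m+2) := rfl
    rw [e1, e2, Fin.ext_iff] at this
    simp at this
  have hAC : Disjoint (extA '' Sset (m+2)) ({desc} : Set (Fin (m+3) → Fin (m+3))) := by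
    rw [Set.disjoint_left]
    rintro π ⟨σ, _, rfl⟩ h
    rw [Set.mem_singleton_iff] at h
    have := congrFun h 0
    have e2 : extA σ 0 = Fin.last (m+2) := rfl
    have e3 : (desc (0 : Fin (m+3))).val = m+1 := by
      rw [desc_val 0 (by simp)]
      simp
    rw [e2, Fin.ext_iff, e3] at this
    simp at this
  have hBC : Disjoint (extB '' Sset (m+1)) ({desc} : Set (Fin (m+3) → Fin (m+3))) := by
    rw [Set.disjoint_left]
    rintro π ⟨τ, _, rfl⟩ h
    rw [Set.mem_singleton_iff] at h
    have := congrFun h 1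
    have e1 : extB τ 1 = Fin.last (m+2) := extB_one τ
    have e3 : (desc (1 : Fin (m+3))).val = m := by
      rw [desc_val 1 (by simp [Fin.val_one])]
      simp [Fin.val_one]
    rw [e1, Fin.ext_iff, e3] at this
    simp at this
  rw [partition m]
  rw [Set.ncard_union_eq (Set.disjoint_union_right.mpr ⟨hAB, hAC⟩) (Set.toFinite _)
    (Set.toFinite _)]
  rw [Set.ncard_union_eq hBC (Set.toFinite _) (Set.toFinite _)]
  rw [Set.ncard_image_of_injective _ extA_injective,
    Set.ncard_image_of_injective _ extB_injective, Set.ncard_singleton]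
  omega

lemma base1 : (Sset 1).ncard = 1 := by
  have : Sset 1 = {fun _ => 0} := by
    ext π
    constructor
    · intro _
      funext i
      exact Subsingleton.elim _ _
    · rintro rfl
      exact ⟨⟨⟨fun a b _ => Subsingleton.elim a b, fun y => ⟨0, Subsingleton.elim _ _⟩⟩,
        avoids_of_lt _ _ (by norm_num), avoids_of_lt _ _ (by norm_num),
        avoids_of_lt _ _ (by norm_num)⟩, avoids_of_lt _ _ (by norm_num)⟩
  rw [this, Set.ncard_singleton]

lemma base2 : (Sset 2).ncard = 2 := by
  have : Sset 2 = {(fun i => i : Fin 2 → Fin 2), (fun i => ⟨1 - i.val, by omega⟩ : Fin 2 → Fin 2)} := by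
    ext π
    constructor
    · rintro ⟨⟨hbij, -, -, -⟩, -⟩
      have h2 : ∀ i : Fin 2, (π i).val < 2 := fun i => (π i).isLt
      have hne : (π 0).val ≠ (π 1).val := by
        intro h
        have := hbij.1 (Fin.ext h)
        rw [Fin.ext_iff] at this
        simp at this
      rcases (by omega : (π 0).val = 0 ∨ (π 0).val = 1) with h0 | h0
      · left
        funext i
        have hi2 := i.isLt
        apply Fin.ext
        rcases (by omega : i.val = 0 ∨ i.val = 1) with hi | hi
        · have e : i = 0 := Fin.ext hi
          subst e
          simp only [Fin.val_zero]
          omega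
        · have e : i = 1 := Fin.ext hi
          subst e
          simp only [Fin.val_one]
          have := h2 1
          omega
      · right
        funext i
        have hi2 := i.isLt
        apply Fin.ext
        rcases (by omega : i.val = 0 ∨ i.val = 1) with hi | hi
        · have e : i = 0 := Fin.ext hi
          subst e
          simp only [Fin.val_zero]
          omega
        · have e : i = 1 := Fin.ext hi
          subst e
          simp only [Fin.val_one]
          have := h2 1
          omega
    · intro h
      have hb : Function.Bijective π := by
        rcases h with rfl | rfl
        · exact Function.bijective_id
        · rw [← Finite.injective_iff_bijective]
          intro a b hab
          rw [Fin.ext_iff] at hab ⊢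
          have := a.isLt; have := b.isLt
          simp at hab
          omega
      exact ⟨⟨hb, avoids_of_lt _ _ (by norm_num), avoids_of_lt _ _ (by norm_num),
        avoids_of_lt _ _ (by norm_num)⟩, avoids_of_lt _ _ (by norm_num)⟩
  rw [this]
  rw [Set.ncard_pair]
  intro h
  have := congrFun h 0
  rw [Fin.ext_iff] at this
  simp at this

lemma main_count : ∀ n : ℕ, (Sset (n+1)).ncard = Nat.fib (n+3) - 1
  | 0 => by rw [base1]; rfl
  | 1 => by rw [base2]; rfl
  | (n+2) => by
    have h1 := main_count (n+1)
    have h2 := main_count n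
    have e : n+2+1 = n+3 := rfl
    rw [e, card_step n, h1, h2]
    have f1 : Nat.fib (n+2+3) = Nat.fib (n+1+3) + Nat.fib (n+3) := by
      rw [show n+2+3 = (n+3)+2 from rfl, Nat.fib_add_two]
      ring_nf
    have p1 : 1 ≤ Nat.fib (n+3) := Nat.fib_pos.mpr (by omega)
    have p2 : 1 ≤ Nat.fib (n+1+3) := Nat.fib_pos.mpr (by omega)
    omega

theorem stmt_6 (n : ℕ) (hn : 1 ≤ n) :
    (Nat.card ↥{π ∈ TSS132 n | Avoids π ![1,2,3]} : ℤ) = Nat.fib (n+2) - 1 := by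
  obtain ⟨m, rfl⟩ : ∃ m, n = m + 1 := ⟨n - 1, by omega⟩
  have e : {π ∈ TSS132 (m+1) | Avoids π ![1,2,3]} = Sset (m+1) := rfl
  rw [e, Nat.card_coe_set_eq, main_count m]
  have p1 : 1 ≤ Nat.fib (m+3) := Nat.fib_pos.mpr (by omega)
  have e2 : m+1+2 = m+3 := rfl
  rw [e2]
  push_cast [p1]
  ring
end

section
/- For all n ≥ 2, the number of permutations of {1,...,n} avoiding the patterns 132, 2341, 3241, and 3412 equals 3·2^{n-2} - 1. -/
section Pile

variable {N : ℕ} {π : Fin N → Fin N}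

private lemma fin3cases : ∀ i : Fin 3, i = 0 ∨ i = 1 ∨ i = 2 := by decide
private lemma fin4cases : ∀ i : Fin 4, i = 0 ∨ i = 1 ∨ i = 2 ∨ i = 3 := by decide

lemma contains132 {a b c : Fin N} (hab : a < b) (hbc : b < c)
    (h1 : π a < π c) (h2 : π c < π b) : Contains π ![1,3,2] := by
  have hac : π a < π b := h1.trans h2
  refine ⟨![a,b,c], ?_, ?_⟩
  · intro x y hxy
    rcases fin3cases x with rfl|rfl|rfl <;> rcases fin3cases y with rfl|rfl|rfl <;>
      first
        | exact absurd hxy (by decide)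
        | (show a < b; exact hab) | (show b < c; exact hbc) | (show a < c; exact hab.trans hbc)
  · intro i j
    rcases fin3cases i with rfl|rfl|rfl <;> rcases fin3cases j with rfl|rfl|rfl <;>
      [ skip; exact iff_of_true (by decide) hac; exact iff_of_true (by decide) h1;
        exact iff_of_false (by decide) (asymm hac); skip;
        exact iff_of_false (by decide) (asymm h2);
        exact iff_of_false (by decide) (asymm h1); exact iff_of_true (by decide) h2; skip ]
      <;> exact iff_of_false (by norm_num) (lt_irrefl _)

private lemma sm4 {a b c d : Fin N} (hab : a < b) (hbc : b < c) (hcd : c < d) :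
    StrictMono ![a,b,c,d] := by
  intro x y hxy
  rcases fin4cases x with rfl|rfl|rfl|rfl <;> rcases fin4cases y with rfl|rfl|rfl|rfl <;>
    first
      | exact absurd hxy (by decide)
      | (show a < b; exact hab) | (show b < c; exact hbc) | (show c < d; exact hcd)
      | (show a < c; exact hab.trans hbc) | (show b < d; exact hbc.trans hcd)
      | (show a < d; exact hab.trans (hbc.trans hcd))

lemma contains2341 {a b c d : Fin N} (hab : a < b) (hbc : b < c) (hcd : c < d)
    (h1 : π d < π a) (h2 : π a < π b) (h3 : π b < π c) : Contains π ![2,3,4,1] := by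
  refine ⟨![a,b,c,d], sm4 hab hbc hcd, ?_⟩
  intro i j
  rcases fin4cases i with rfl|rfl|rfl|rfl <;> rcases fin4cases j with rfl|rfl|rfl|rfl <;>
    [ skip;
      exact iff_of_true (by decide) h2;
      exact iff_of_true (by decide) (h2.trans h3);
      exact iff_of_false (by decide) (asymm h1);
      exact iff_of_false (by decide) (asymm h2);
      skip;
      exact iff_of_true (by decide) h3;
      exact iff_of_false (by decide) (asymm (h1.trans h2));
      exact iff_of_false (by decide) (asymm (h2.trans h3));
      exact iff_of_false (by decide) (asymm h3);
      skip;
      exact iff_of_false (by decide) (asymm (h1.trans (h2.trans h3)));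
      exact iff_of_true (by decide) h1;
      exact iff_of_true (by decide) (h1.trans h2);
      exact iff_of_true (by decide) (h1.trans (h2.trans h3));
      skip ]
    <;> exact iff_of_false (by norm_num) (lt_irrefl _)

lemma contains3241 {a b c d : Fin N} (hab : a < b) (hbc : b < c) (hcd : c < d)
    (h1 : π d < π b) (h2 : π b < π a) (h3 : π a < π c) : Contains π ![3,2,4,1] := by
  refine ⟨![a,b,c,d], sm4 hab hbc hcd, ?_⟩
  intro i j
  rcases fin4cases i with rfl|rfl|rfl|rfl <;> rcases fin4cases j with rfl|rfl|rfl|rfl <;>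
    [ skip;
      exact iff_of_false (by decide) (asymm h2);
      exact iff_of_true (by decide) h3;
      exact iff_of_false (by decide) (asymm (h1.trans h2));
      exact iff_of_true (by decide) h2;
      skip;
      exact iff_of_true (by decide) (h2.trans h3);
      exact iff_of_false (by decide) (asymm h1);
      exact iff_of_false (by decide) (asymm h3);
      exact iff_of_false (by decide) (asymm (h2.trans h3));
      skip;
      exact iff_of_false (by decide) (asymm (h1.trans (h2.trans h3)));
      exact iff_of_true (by decide) (h1.trans h2);
      exact iff_of_true (by decide) h1;
      exact iff_of_true (by decide) ((h1.trans h2).trans h3);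
      skip ]
    <;> exact iff_of_false (by norm_num) (lt_irrefl _)

lemma contains3412 {a b c d : Fin N} (hab : a < b) (hbc : b < c) (hcd : c < d)
    (h1 : π c < π d) (h2 : π d < π a) (h3 : π a < π b) : Contains π ![3,4,1,2] := by
  refine ⟨![a,b,c,d], sm4 hab hbc hcd, ?_⟩
  intro i j
  rcases fin4cases i with rfl|rfl|rfl|rfl <;> rcases fin4cases j with rfl|rfl|rfl|rfl <;>
    [ skip;
      exact iff_of_true (by decide) h3;
      exact iff_of_false (by decide) (asymm (h1.trans h2));
      exact iff_of_false (by decide) (asymm h2);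
      exact iff_of_false (by decide) (asymm h3);
      skip;
      exact iff_of_false (by decide) (asymm ((h1.trans h2).trans h3));
      exact iff_of_false (by decide) (asymm (h2.trans h3));
      exact iff_of_true (by decide) (h1.trans h2);
      exact iff_of_true (by decide) ((h1.trans h2).trans h3);
      skip;
      exact iff_of_true (by decide) h1;
      exact iff_of_true (by decide) h2;
      exact iff_of_true (by decide) (h2.trans h3);
      exact iff_of_false (by decide) (asymm h1);
      skip ]
    <;> exact iff_of_false (by norm_num) (lt_irrefl _)

end Pile

/-- Our working description of the avoider set. -/
def S (n : ℕ) : Set (Fin n → Fin n) :=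
  {π | (Function.Bijective π ∧ Avoids π ![1,3,2] ∧ Avoids π ![2,3,4,1] ∧ Avoids π ![3,2,4,1])
    ∧ Avoids π ![3,4,1,2]}

lemma mem_S {n} {π : Fin n → Fin n} :
    π ∈ S n ↔ Function.Bijective π ∧ Avoids π ![1,3,2] ∧ Avoids π ![2,3,4,1] ∧
      Avoids π ![3,2,4,1] ∧ Avoids π ![3,4,1,2] := by
  unfold S; constructor
  · rintro ⟨⟨h1, h2, h3, h4⟩, h5⟩; exact ⟨h1, h2, h3, h4, h5⟩
  · rintro ⟨h1, h2, h3, h4, h5⟩; exact ⟨⟨h1, h2, h3, h4⟩, h5⟩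

def appendMax {n : ℕ} (σ : Fin n → Fin n) : Fin (n+1) → Fin (n+1) :=
  Fin.snoc (fun i => (σ i).castSucc) (Fin.last n)

def prependMax {n : ℕ} (σ : Fin n → Fin n) : Fin (n+1) → Fin (n+1) :=
  Fin.cons (Fin.last n) (fun i => (σ i).castSucc)

def Epm (n : ℕ) : Fin (n+2) → Fin (n+2) := fun i => (Equiv.swap 0 1 i).rev

lemma appendMax_castSucc {n} (σ : Fin n → Fin n) (i : Fin n) :
    appendMax σ i.castSucc = (σ i).castSucc := Fin.snoc_castSucc _ _ _

lemma appendMax_last {n} (σ : Fin n → Fin n) :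
    appendMax σ (Fin.last n) = Fin.last n := Fin.snoc_last _ _

lemma prependMax_zero {n} (σ : Fin n → Fin n) : prependMax σ 0 = Fin.last n := Fin.cons_zero _ _

lemma prependMax_succ {n} (σ : Fin n → Fin n) (i : Fin n) :
    prependMax σ i.succ = (σ i).castSucc := Fin.cons_succ _ _ i

lemma contains_of_appendMax {n k : ℕ} {σ : Fin n → Fin n} {p : Fin (k+1) → ℕ}
    (hmax : ∃ j : Fin (k+1), j ≠ Fin.last k ∧ ¬ p j < p (Fin.last k))
    (h : Contains (appendMax σ) p) : Contains σ p := by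
  obtain ⟨f, hf, hiff⟩ := h
  by_cases hl : f (Fin.last k) = Fin.last n
  · obtain ⟨j, hj, hpj⟩ := hmax
    exfalso
    apply hpj
    apply (hiff j (Fin.last k)).mpr
    have hlt : f j < Fin.last n := hl ▸ hf (lt_of_le_of_ne (Fin.le_last j) hj)
    have hx : f j ≠ Fin.last n := ne_of_lt hlt
    rw [hl, appendMax_last, ← Fin.castSucc_castPred (f j) hx, appendMax_castSucc]
    exact Fin.castSucc_lt_last _
  · have hne : ∀ i, f i ≠ Fin.last n := by
      intro i hi
      exact hl (le_antisymm (Fin.le_last _) (hi ▸ hf.monotone (Fin.le_last i)))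
    have key : ∀ i, appendMax σ (f i) = (σ ((f i).castPred (hne i))).castSucc := by
      intro i
      conv_lhs => rw [← Fin.castSucc_castPred (f i) (hne i)]
      exact appendMax_castSucc _ _
    refine ⟨fun i => (f i).castPred (hne i), ?_, ?_⟩
    · intro x y hxy
      have := hf hxy
      simp only [Fin.lt_def, Fin.coe_castPred] at *
      exact this
    · intro i j
      rw [hiff i j, key i, key j, Fin.castSucc_lt_castSucc_iff]

lemma contains_of_prependMax {n k : ℕ} {σ : Fin n → Fin n} {p : Fin (k+1) → ℕ}
    (hmax : ∃ j : Fin (k+1), j ≠ 0 ∧ ¬ p j < p 0)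
    (h : Contains (prependMax σ) p) : Contains σ p := by
  obtain ⟨f, hf, hiff⟩ := h
  by_cases hl : f 0 = 0
  · obtain ⟨j, hj, hpj⟩ := hmax
    exfalso
    apply hpj
    apply (hiff j 0).mpr
    have hlt : (0 : Fin (n+1)) < f j := hl ▸ hf (lt_of_le_of_ne (Fin.zero_le j) (Ne.symm hj))
    have hx : f j ≠ 0 := (ne_of_lt hlt).symm
    rw [hl, prependMax_zero, ← Fin.succ_pred (f j) hx, prependMax_succ]
    exact Fin.castSucc_lt_last _
  · have hne : ∀ i, f i ≠ 0 := by
      intro i hi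
      exact hl (le_antisymm (hi ▸ hf.monotone (Fin.zero_le i)) (Fin.zero_le _))
    have key : ∀ i, prependMax σ (f i) = (σ ((f i).pred (hne i))).castSucc := by
      intro i
      conv_lhs => rw [← Fin.succ_pred (f i) (hne i)]
      exact prependMax_succ _ _
    refine ⟨fun i => (f i).pred (hne i), ?_, ?_⟩
    · intro x y hxy
      have h2 := hf hxy
      have h0x := (hne x)
      simp only [Fin.lt_def, Fin.coe_pred] at *
      have : f x ≠ 0 := hne x
      have : (f x : ℕ) ≠ 0 := fun hc => this (Fin.ext hc)
      omega
    · intro i j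
      rw [hiff i j, key i, key j, Fin.castSucc_lt_castSucc_iff]

lemma appendMax_mem {n : ℕ} {σ : Fin n → Fin n} (hσ : σ ∈ S n) : appendMax σ ∈ S (n+1) := by
  rw [mem_S] at hσ ⊢
  obtain ⟨hb, h1, h2, h3, h4⟩ := hσ
  refine ⟨?_, ?_, ?_, ?_, ?_⟩
  · rw [Fintype.bijective_iff_injective_and_card]
    refine ⟨?_, rfl⟩
    intro x y hxy
    induction x using Fin.lastCases with
    | last =>
      induction y using Fin.lastCases with
      | last => rfl
      | cast j =>
        rw [appendMax_last, appendMax_castSucc] at hxy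
        exact absurd hxy.symm (ne_of_lt (Fin.castSucc_lt_last _))
    | cast i =>
      induction y using Fin.lastCases with
      | last =>
        rw [appendMax_last, appendMax_castSucc] at hxy
        exact absurd hxy (ne_of_lt (Fin.castSucc_lt_last _))
      | cast j =>
        rw [appendMax_castSucc, appendMax_castSucc] at hxy
        exact congrArg _ (hb.injective (Fin.castSucc_injective _ hxy))
  · exact fun hc => h1 (contains_of_appendMax ⟨1, by decide, by decide⟩ hc)
  · exact fun hc => h2 (contains_of_appendMax ⟨2, by decide, by decide⟩ hc)
  · exact fun hc => h3 (contains_of_appendMax ⟨2, by decide, by decide⟩ hc)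
  · exact fun hc => h4 (contains_of_appendMax ⟨1, by decide, by decide⟩ hc)

lemma prependMax_mem {n : ℕ} {σ : Fin n → Fin n} (hσ : σ ∈ S n) : prependMax σ ∈ S (n+1) := by
  rw [mem_S] at hσ ⊢
  obtain ⟨hb, h1, h2, h3, h4⟩ := hσ
  refine ⟨?_, ?_, ?_, ?_, ?_⟩
  · rw [Fintype.bijective_iff_injective_and_card]
    refine ⟨?_, rfl⟩
    intro x y hxy
    induction x using Fin.cases with
    | zero =>
      induction y using Fin.cases with
      | zero => rfl
      | succ j =>
        rw [prependMax_zero, prependMax_succ] at hxy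
        exact absurd hxy.symm (ne_of_lt (Fin.castSucc_lt_last _))
    | succ i =>
      induction y using Fin.cases with
      | zero =>
        rw [prependMax_zero, prependMax_succ] at hxy
        exact absurd hxy (ne_of_lt (Fin.castSucc_lt_last _))
      | succ j =>
        rw [prependMax_succ, prependMax_succ] at hxy
        exact congrArg _ (hb.injective (Fin.castSucc_injective _ hxy))
  · exact fun hc => h1 (contains_of_prependMax ⟨1, by decide, by decide⟩ hc)
  · exact fun hc => h2 (contains_of_prependMax ⟨2, by decide, by decide⟩ hc)
  · exact fun hc => h3 (contains_of_prependMax ⟨2, by decide, by decide⟩ hc)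
  · exact fun hc => h4 (contains_of_prependMax ⟨1, by decide, by decide⟩ hc)

lemma Epm_bijective (n : ℕ) : Function.Bijective (Epm n) := by
  have : Epm n = ⇑((Equiv.swap 0 1).trans (Fin.revPerm)) := rfl
  rw [this]
  exact Equiv.bijective _

lemma Epm_ascent {n : ℕ} {p q : Fin (n+2)} (hpq : p < q) (h : Epm n p < Epm n q) :
    p = 0 ∧ q = 1 := by
  have h' : Equiv.swap 0 1 q < Equiv.swap 0 1 p := by
    have := h
    unfold Epm at this
    rwa [Fin.rev_lt_rev] at this
  by_cases hp0 : p = 0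
  · subst hp0
    rw [Equiv.swap_apply_left] at h'
    by_cases hq1 : q = 1
    · exact ⟨rfl, hq1⟩
    · exfalso
      have hq0 : q ≠ 0 := ne_of_gt hpq
      rw [Equiv.swap_apply_of_ne_of_ne hq0 hq1] at h'
      have h1 : (q : ℕ) < 1 := h'
      have h0 : (q : ℕ) ≠ 0 := fun hc => hq0 (Fin.ext hc)
      omega
  · by_cases hp1 : p = 1
    · subst hp1
      rw [Equiv.swap_apply_right] at h'
      exact absurd h' (Fin.not_lt_zero _)
    · exfalso
      have hpv : 2 ≤ (p : ℕ) := by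
        have h0 : (p : ℕ) ≠ 0 := fun hc => hp0 (Fin.ext hc)
        have h1 : (p : ℕ) ≠ 1 := fun hc => hp1 (Fin.ext hc)
        omega
      have hq0 : q ≠ 0 := by
        intro hc; subst hc; exact absurd hpq (Fin.not_lt_zero _)
      have hq1 : q ≠ 1 := by
        intro hc
        subst hc
        have : (p : ℕ) < 1 := hpq
        omega
      rw [Equiv.swap_apply_of_ne_of_ne hq0 hq1, Equiv.swap_apply_of_ne_of_ne hp0 hp1] at h'
      exact absurd h' (asymm hpq)

lemma Epm_mem (n : ℕ) : Epm n ∈ S (n+2) := by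
  rw [mem_S]
  refine ⟨Epm_bijective n, ?_, ?_, ?_, ?_⟩
  · rintro ⟨f, hf, hiff⟩
    have h02 : Epm n (f 0) < Epm n (f 2) := (hiff 0 2).mp (by decide)
    obtain ⟨e0, e2⟩ := Epm_ascent (hf (show (0:Fin 3) < 2 by decide)) h02
    have h01 : f 0 < f 1 := hf (show (0:Fin 3) < 1 by decide)
    have h12 : f 1 < f 2 := hf (show (1:Fin 3) < 2 by decide)
    rw [e0] at h01; rw [e2] at h12
    have a1 : 0 < (f 1 : ℕ) := h01
    have a2 : (f 1 : ℕ) < 1 := h12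
    omega
  · rintro ⟨f, hf, hiff⟩
    have h01 : Epm n (f 0) < Epm n (f 1) := (hiff 0 1).mp (by norm_num)
    have h12 : Epm n (f 1) < Epm n (f 2) := (hiff 1 2).mp (by decide)
    obtain ⟨e0, e1⟩ := Epm_ascent (hf (show (0:Fin 4) < 1 by decide)) h01
    obtain ⟨e1', _⟩ := Epm_ascent (hf (show (1:Fin 4) < 2 by decide)) h12
    rw [e1] at e1'
    exact absurd e1' (by simp [Fin.ext_iff])
  · rintro ⟨f, hf, hiff⟩
    have h12 : Epm n (f 1) < Epm n (f 2) := (hiff 1 2).mp (by decide)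
    obtain ⟨e1, _⟩ := Epm_ascent (hf (show (1:Fin 4) < 2 by decide)) h12
    have h01 : f 0 < f 1 := hf (show (0:Fin 4) < 1 by decide)
    rw [e1] at h01
    exact absurd h01 (Fin.not_lt_zero _)
  · rintro ⟨f, hf, hiff⟩
    have h23 : Epm n (f 2) < Epm n (f 3) := (hiff 2 3).mp (by decide)
    obtain ⟨e2, _⟩ := Epm_ascent (hf (show (2:Fin 4) < 3 by decide)) h23
    have h12 : f 1 < f 2 := hf (show (1:Fin 4) < 2 by decide)
    rw [e2] at h12
    exact absurd h12 (Fin.not_lt_zero _)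

lemma S_decomp {n : ℕ} {π : Fin (n+2) → Fin (n+2)} (hπ : π ∈ S (n+2))
    (h0 : π 0 ≠ Fin.last (n+1)) (hl : π (Fin.last (n+1)) ≠ Fin.last (n+1)) : π = Epm n := by
  rw [mem_S] at hπ
  obtain ⟨hb, h132, h2341, h3241, h3412⟩ := hπ
  obtain ⟨i, hi⟩ := hb.surjective (Fin.last (n+1))
  have hi0 : i ≠ 0 := fun hc => h0 (hc ▸ hi)
  have hil : i ≠ Fin.last (n+1) := fun hc => hl (hc ▸ hi)
  have hlt : ∀ x, x ≠ i → π x < Fin.last (n+1) := by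
    intro x hx
    refine lt_of_le_of_ne (Fin.le_last _) (fun he => hx (hb.injective (he.trans hi.symm)))
  -- Step A
  have stepA : ∀ p q : Fin (n+2), p < i → i < q → π q < π p := by
    intro p q hp hq
    by_contra hc
    have hne : π p ≠ π q := fun h => ne_of_lt (hp.trans hq) (hb.injective h)
    have hpq : π p < π q := lt_of_le_of_ne (not_lt.mp hc) hne
    exact h132 (contains132 hp hq hpq (hi ▸ hlt q (ne_of_gt hq)))
  -- Step B : i = 1
  have hiv : (i : ℕ) ≠ 0 := fun hc => hi0 (Fin.ext hc)
  have stepB : i = (1 : Fin (n+2)) := by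
    by_contra hc
    have hiv1 : (i : ℕ) ≠ 1 := by
      intro h1
      apply hc
      apply Fin.ext
      simpa using h1
    have h2le : 2 ≤ (i : ℕ) := by omega
    have h01 : (0 : Fin (n+2)) < 1 := by
      rw [Fin.lt_def]; simp
    have h1i : (1 : Fin (n+2)) < i := by
      rw [Fin.lt_def]; simp; omega
    have h0i : (0 : Fin (n+2)) < i := h01.trans h1i
    have hilst : i < Fin.last (n+1) := lt_of_le_of_ne (Fin.le_last _) hil
    have hL0 : π (Fin.last (n+1)) < π 0 := stepA 0 _ h0i hilst
    have hL1 : π (Fin.last (n+1)) < π 1 := stepA 1 _ h1i hilst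
    have h0i' : π 0 < π i := hi ▸ hlt 0 (fun hc' => hi0 hc'.symm)
    have h1i' : π 1 < π i := hi ▸ hlt 1 (fun hc' => hiv1 (congrArg Fin.val hc').symm)
    have hne : π 0 ≠ π 1 := fun h => (ne_of_lt h01) (hb.injective h)
    rcases lt_or_gt_of_ne hne with hlt01 | hgt01
    · exact h2341 (contains2341 h01 h1i hilst hL0 hlt01 h1i')
    · exact h3241 (contains3241 h01 h1i hilst hL1 hgt01 h0i')
  -- Step C : tail decreasing
  have stepC : ∀ q q' : Fin (n+2), (1:Fin (n+2)) < q → q < q' → π q' < π q := by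
    intro q q' h1q hqq'
    by_contra hc
    have hne : π q ≠ π q' := fun h => ne_of_lt hqq' (hb.injective h)
    have hpq : π q < π q' := lt_of_le_of_ne (not_lt.mp hc) hne
    have h01 : (0 : Fin (n+2)) < 1 := by rw [Fin.lt_def]; simp
    have hq'0 : π q' < π 0 := stepA 0 q' (stepB ▸ h01) (stepB ▸ (h1q.trans hqq'))
    have h0lt : π 0 < π 1 := by
      have := hlt 0 (fun hc' => hi0 hc'.symm)
      rw [← hi, stepB] at this
      exact this
    exact h3412 (contains3412 h01 h1q hqq' hpq hq'0 h0lt)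
  -- Step D : conclude
  have hτ : StrictMono (fun x : Fin (n+2) => (π (Equiv.swap 0 1 x)).rev) := by
    intro p q hpq
    simp only [Fin.rev_lt_rev]
    by_cases hp0 : p = 0
    · subst hp0
      rw [Equiv.swap_apply_left]
      have hq1' : Equiv.swap 0 1 q ≠ 1 := by
        by_cases hq1 : q = 1
        · subst hq1
          rw [Equiv.swap_apply_right]
          simp [Fin.ext_iff]
        · rw [Equiv.swap_apply_of_ne_of_ne (ne_of_gt hpq) hq1]
          exact hq1
      have hq1'' : Equiv.swap 0 1 q ≠ i := by rw [stepB]; exact hq1'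
      have := hlt _ hq1''
      have h1i : π 1 = Fin.last (n+1) := by rw [← stepB]; exact hi
      rwa [h1i]
    · by_cases hp1 : p = 1
      · subst hp1
        rw [Equiv.swap_apply_right]
        have hq0 : q ≠ 0 := by
          intro hc; subst hc; exact absurd hpq (Fin.not_lt_zero _)
        have hq1 : q ≠ 1 := ne_of_gt hpq
        rw [Equiv.swap_apply_of_ne_of_ne hq0 hq1]
        refine stepA 0 q ?_ ?_
        · rw [stepB]; rw [Fin.lt_def]; simp
        · rw [stepB]
          rw [Fin.lt_def] at hpq ⊢
          have : (1:Fin (n+2)).val = 1 := by simp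
          omega
      · have hpv : 2 ≤ (p : ℕ) := by
          have a0 : (p : ℕ) ≠ 0 := fun hc => hp0 (Fin.ext hc)
          have a1 : (p : ℕ) ≠ 1 := fun hc => hp1 (Fin.ext (by simpa using hc))
          omega
        have hq0 : q ≠ 0 := by
          intro hc; subst hc; exact absurd hpq (Fin.not_lt_zero _)
        have hq1 : q ≠ 1 := by
          intro hc; subst hc
          have : (p : ℕ) < (1:Fin (n+2)).val := hpq
          simp at this; omega
        rw [Equiv.swap_apply_of_ne_of_ne hq0 hq1, Equiv.swap_apply_of_ne_of_ne hp0 hp1]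
        refine stepC p q ?_ hpq
        rw [Fin.lt_def]
        have : (1:Fin (n+2)).val = 1 := by simp
        omega
  have hbij : Function.Bijective (fun x : Fin (n+2) => (π (Equiv.swap 0 1 x)).rev) := by
    exact Fin.revPerm.bijective.comp (hb.comp (Equiv.swap 0 1).bijective)
  have hid : (fun x : Fin (n+2) => (π (Equiv.swap 0 1 x)).rev) = id := by
    have hwf : WellFoundedLT (Fin (n+2)) := inferInstance
    exact (hτ.range_inj strictMono_id).1
      (by rw [Set.range_id, Set.range_eq_univ.mpr hbij.surjective])
  funext x
  have hx := congrFun hid (Equiv.swap 0 1 x)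
  simp only [id_eq, Equiv.swap_apply_self] at hx
  have := congrArg Fin.rev hx
  rw [Fin.rev_rev] at this
  rw [this]
  rfl

lemma exists_appendMax {n : ℕ} {π : Fin (n+1) → Fin (n+1)} (hπ : π ∈ S (n+1))
    (hl : π (Fin.last n) = Fin.last n) : ∃ σ ∈ S n, π = appendMax σ := by
  rw [mem_S] at hπ
  obtain ⟨hb, h1, h2, h3, h4⟩ := hπ
  have hne : ∀ i : Fin n, π i.castSucc ≠ Fin.last n := by
    intro i hc
    exact ne_of_lt (Fin.castSucc_lt_last i) (hb.injective (hc.trans hl.symm))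
  set σ : Fin n → Fin n := fun i => (π i.castSucc).castPred (hne i) with hσ
  have hval : ∀ i : Fin n, (σ i).castSucc = π i.castSucc := fun i =>
    Fin.castSucc_castPred _ _
  have heq : π = appendMax σ := by
    funext x
    induction x using Fin.lastCases with
    | last => rw [appendMax_last, hl]
    | cast i => rw [appendMax_castSucc, hval]
  refine ⟨σ, ?_, heq⟩
  have key : ∀ (k : ℕ) (p : Fin k → ℕ), Contains σ p → Contains π p := by
    rintro k p ⟨g, hg, hiff⟩
    refine ⟨fun x => (g x).castSucc, fun x y hxy =>
      Fin.castSucc_lt_castSucc_iff.mpr (hg hxy), ?_⟩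
    intro i j
    rw [hiff i j, ← hval, ← hval, Fin.castSucc_lt_castSucc_iff]
  rw [mem_S]
  refine ⟨?_, fun hc => h1 (key _ _ hc), fun hc => h2 (key _ _ hc),
    fun hc => h3 (key _ _ hc), fun hc => h4 (key _ _ hc)⟩
  rw [Fintype.bijective_iff_injective_and_card]
  refine ⟨?_, rfl⟩
  intro x y hxy
  have : (σ x).castSucc = (σ y).castSucc := congrArg _ hxy
  rw [hval, hval] at this
  exact Fin.castSucc_injective _ (hb.injective this)

lemma exists_prependMax {n : ℕ} {π : Fin (n+1) → Fin (n+1)} (hπ : π ∈ S (n+1))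
    (hl : π 0 = Fin.last n) : ∃ σ ∈ S n, π = prependMax σ := by
  rw [mem_S] at hπ
  obtain ⟨hb, h1, h2, h3, h4⟩ := hπ
  have hne : ∀ i : Fin n, π i.succ ≠ Fin.last n := by
    intro i hc
    have := hb.injective (hc.trans hl.symm)
    exact (Fin.succ_ne_zero i) this
  set σ : Fin n → Fin n := fun i => (π i.succ).castPred (hne i) with hσ
  have hval : ∀ i : Fin n, (σ i).castSucc = π i.succ := fun i =>
    Fin.castSucc_castPred _ _
  have heq : π = prependMax σ := by
    funext x
    induction x using Fin.cases with
    | zero => rw [prependMax_zero, hl]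
    | succ i => rw [prependMax_succ, hval]
  refine ⟨σ, ?_, heq⟩
  have key : ∀ (k : ℕ) (p : Fin k → ℕ), Contains σ p → Contains π p := by
    rintro k p ⟨g, hg, hiff⟩
    refine ⟨fun x => (g x).succ, fun x y hxy =>
      Fin.succ_lt_succ_iff.mpr (hg hxy), ?_⟩
    intro i j
    rw [hiff i j]
    rw [← Fin.castSucc_lt_castSucc_iff, hval, hval]
  rw [mem_S]
  refine ⟨?_, fun hc => h1 (key _ _ hc), fun hc => h2 (key _ _ hc),
    fun hc => h3 (key _ _ hc), fun hc => h4 (key _ _ hc)⟩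
  rw [Fintype.bijective_iff_injective_and_card]
  refine ⟨?_, rfl⟩
  intro x y hxy
  have : (σ x).castSucc = (σ y).castSucc := congrArg _ hxy
  rw [hval, hval] at this
  exact Fin.succ_injective _ (hb.injective this)

lemma S_eq (n : ℕ) :
    S (n+2) = (appendMax '' S (n+1) ∪ prependMax '' S (n+1)) ∪ {Epm n} := by
  ext π
  constructor
  · intro hπ
    by_cases hl : π (Fin.last (n+1)) = Fin.last (n+1)
    · obtain ⟨σ, hσ, heq⟩ := exists_appendMax hπ hl
      exact Or.inl (Or.inl ⟨σ, hσ, heq.symm⟩)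
    · by_cases h0 : π 0 = Fin.last (n+1)
      · obtain ⟨σ, hσ, heq⟩ := exists_prependMax hπ h0
        exact Or.inl (Or.inr ⟨σ, hσ, heq.symm⟩)
      · exact Or.inr (S_decomp hπ h0 hl)
  · rintro ((⟨σ, hσ, rfl⟩ | ⟨σ, hσ, rfl⟩) | hE)
    · exact appendMax_mem hσ
    · exact prependMax_mem hσ
    · rw [Set.mem_singleton_iff] at hE
      rw [hE]
      exact Epm_mem n

lemma appendMax_injective {n : ℕ} : Function.Injective (appendMax (n := n)) := by
  intro σ σ' h
  funext i
  have := congrFun h i.castSucc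
  rw [appendMax_castSucc, appendMax_castSucc] at this
  exact Fin.castSucc_injective _ this

lemma prependMax_injective {n : ℕ} : Function.Injective (prependMax (n := n)) := by
  intro σ σ' h
  funext i
  have := congrFun h i.succ
  rw [prependMax_succ, prependMax_succ] at this
  exact Fin.castSucc_injective _ this

lemma card_rec (n : ℕ) : (S (n+3)).ncard = 2 * (S (n+2)).ncard + 1 := by
  have hEA : Epm (n+1) ∉ appendMax '' S (n+2) := by
    rintro ⟨σ, _, heq⟩
    have h1 : appendMax σ (Fin.last (n+2)) = Fin.last (n+2) := appendMax_last σ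
    rw [heq] at h1
    unfold Epm at h1
    have hlast0 : (Fin.last (n+2) : Fin (n+3)) ≠ 0 := by
      simp [Fin.ext_iff]
    have hlast1 : (Fin.last (n+2) : Fin (n+3)) ≠ 1 := by
      simp [Fin.ext_iff]
    rw [Equiv.swap_apply_of_ne_of_ne hlast0 hlast1, Fin.rev_last] at h1
    exact hlast0 h1.symm
  have hEP : Epm (n+1) ∉ prependMax '' S (n+2) := by
    rintro ⟨σ, _, heq⟩
    have h1 : prependMax σ 0 = Fin.last (n+2) := prependMax_zero σ
    rw [heq] at h1
    unfold Epm at h1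
    rw [Equiv.swap_apply_left] at h1
    have := congrArg Fin.val h1
    rw [Fin.val_rev] at this
    simp at this
  have hAP : Disjoint (appendMax '' S (n+2)) (prependMax '' S (n+2)) := by
    rw [Set.disjoint_left]
    rintro π ⟨σ, _, heq⟩ ⟨σ', _, heq'⟩
    have h1 : π 0 = Fin.last (n+2) := by rw [← heq']; exact prependMax_zero σ'
    have h2 : π 0 = (σ 0).castSucc := by
      rw [← heq, ← Fin.castSucc_zero]
      exact appendMax_castSucc σ 0
    rw [h1] at h2
    exact ne_of_lt (Fin.castSucc_lt_last (σ 0)) h2.symm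
  rw [S_eq (n+1)]
  rw [Set.ncard_union_eq (by
      rw [Set.disjoint_singleton_right]
      rintro (h | h)
      exacts [hEA h, hEP h])
    ((Set.toFinite _).union (Set.toFinite _)) (Set.toFinite _)]
  rw [Set.ncard_union_eq hAP (Set.toFinite _) (Set.toFinite _)]
  rw [Set.ncard_image_of_injective _ appendMax_injective,
    Set.ncard_image_of_injective _ prependMax_injective, Set.ncard_singleton]
  ring

lemma avoids_of_short {n k : ℕ} (hnk : n < k) (π : Fin n → Fin n) (p : Fin k → ℕ) :
    Avoids π p := by
  rintro ⟨f, hf, -⟩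
  have := Fintype.card_le_of_injective f hf.injective
  simp only [Fintype.card_fin] at this
  omega

lemma card_base : (S 2).ncard = 2 := by
  have hS : S 2 = {π : Fin 2 → Fin 2 | Function.Bijective π} := by
    ext π
    rw [mem_S]
    simp only [Set.mem_setOf_eq]
    refine ⟨fun h => h.1, fun h => ⟨h, ?_, ?_, ?_, ?_⟩⟩
    · exact avoids_of_short (by norm_num) _ _
    · exact avoids_of_short (by norm_num) _ _
    · exact avoids_of_short (by norm_num) _ _
    · exact avoids_of_short (by norm_num) _ _
  rw [hS, ← Nat.card_coe_set_eq]
  have e : Equiv.Perm (Fin 2) ≃ {π : Fin 2 → Fin 2 | Function.Bijective π} :=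
    { toFun := fun g => ⟨g, g.bijective⟩
      invFun := fun f => Equiv.ofBijective f.1 f.2
      left_inv := fun g => Equiv.ext fun x => rfl
      right_inv := fun f => Subtype.ext rfl }
  rw [← Nat.card_congr e, Nat.card_eq_fintype_card, Fintype.card_perm]
  rfl

lemma card_S (m : ℕ) : (S (m+2)).ncard = 3 * 2^m - 1 := by
  induction m with
  | zero => simpa using card_base
  | succ k ih =>
    rw [card_rec k, ih]
    have h1 : 1 ≤ 2^k := Nat.one_le_two_pow
    have h2 : (2:ℕ)^(k+1) = 2 * 2^k := by ring
    omega

theorem stmt_10 (n : ℕ) (hn : 2 ≤ n) :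
    Nat.card ↥{π ∈ TSS132 n | Avoids π ![3,4,1,2]} = 3 * 2^(n-2) - 1 := by
  obtain ⟨m, rfl⟩ : ∃ m, n = m + 2 := ⟨n - 2, by omega⟩
  have hset : {π ∈ TSS132 (m+2) | Avoids π ![3,4,1,2]} = S (m+2) := rfl
  rw [hset, Nat.card_coe_set_eq, card_S m]
  simp
end
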